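/- arXiv:1101.0239 — 9 statements merged into one kernel-verified Lean document; each statement's English description precedes it below -/
import Mathlib

section
/- Let (Ω, 𝒜) be a measurable space, P and Q probability measures on (Ω, 𝒜) with P ≪ Q and the Radon–Nikodym derivative dP/dQ essentially bounded (with respect to Q). Let X : Ω → ℝ be integrable with respect to both P and Q, and let φ be a real-valued convex function on an interval containing the range of X, with φ(X) integrable with respect to both P and Q. Then ∫ φ(X) dP − φ(∫ X dP) ≤ ‖dP/dQ‖_∞ · ( ∫ φ(X) dQ − φ(∫ X dQ) ). -/
open MeasureTheory ENNReal

/-- Weighted mean of a function with values in a convex set lies in the set. -/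
lemma wmean_mem {Ω : Type*} [MeasurableSpace Ω] (Q : Measure Ω)
    (w X : Ω → ℝ) (hw : ∀ ω, 0 ≤ w ω)
    (hwi : Integrable w Q) (hwXi : Integrable (fun ω => w ω * X ω) Q)
    (s : Set ℝ) (hs : Convex ℝ s) (hr : ∀ ω, X ω ∈ s)
    {W : ℝ} (hW : ∫ ω, w ω ∂Q = W) (hWpos : 0 < W) :
    (∫ ω, w ω * X ω ∂Q) / W ∈ s := by
  set m := (∫ ω, w ω * X ω ∂Q) / W with hm
  have hI : ∫ ω, w ω * X ω ∂Q = m * W := by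
    rw [hm, div_mul_cancel₀ _ hWpos.ne']
  by_cases hlb : ∃ a ∈ s, a ≤ m
  · by_cases hub : ∃ b ∈ s, m ≤ b
    · obtain ⟨a, ha, ham⟩ := hlb
      obtain ⟨b, hb, hmb⟩ := hub
      exact hs.ordConnected.out ha hb ⟨ham, hmb⟩
    · exfalso
      push_neg at hub
      -- every point of s is < m, so w * (m - X) ≥ 0 with zero integral
      have hf0 : ∀ ω, 0 ≤ w ω * (m - X ω) := fun ω =>
        mul_nonneg (hw ω) (by linarith [hub _ (hr ω)])
      have hfi : Integrable (fun ω => w ω * (m - X ω)) Q := by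
        have : (fun ω => w ω * (m - X ω)) = fun ω => m * w ω - w ω * X ω := by
          funext ω; ring
        rw [this]
        exact (hwi.const_mul m).sub hwXi
      have hint0 : ∫ ω, w ω * (m - X ω) ∂Q = 0 := by
        have : ∫ ω, w ω * (m - X ω) ∂Q
            = m * ∫ ω, w ω ∂Q - ∫ ω, w ω * X ω ∂Q := by
          have h1 : (fun ω => w ω * (m - X ω)) = fun ω => m * w ω - w ω * X ω := by
            funext ω; ring
          rw [h1, integral_sub (hwi.const_mul m) hwXi, integral_const_mul]
        rw [this, hW, hI]; ring
      have hae : (fun ω => w ω * (m - X ω)) =ᵐ[Q] 0 :=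
        (integral_eq_zero_iff_of_nonneg hf0 hfi).mp hint0
      have hw0 : w =ᵐ[Q] 0 := by
        filter_upwards [hae] with ω hω
        have hpos : 0 < m - X ω := by linarith [hub _ (hr ω)]
        have := mul_eq_zero.mp hω
        rcases this with h | h
        · exact h
        · exact absurd h hpos.ne'
      have : ∫ ω, w ω ∂Q = 0 := by
        rw [integral_congr_ae hw0]; simp
      rw [hW] at this; linarith
  · exfalso
    push_neg at hlb
    have hf0 : ∀ ω, 0 ≤ w ω * (X ω - m) := fun ω =>
      mul_nonneg (hw ω) (by linarith [hlb _ (hr ω)])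
    have hfi : Integrable (fun ω => w ω * (X ω - m)) Q := by
      have : (fun ω => w ω * (X ω - m)) = fun ω => w ω * X ω - m * w ω := by
        funext ω; ring
      rw [this]
      exact hwXi.sub (hwi.const_mul m)
    have hint0 : ∫ ω, w ω * (X ω - m) ∂Q = 0 := by
      have : ∫ ω, w ω * (X ω - m) ∂Q
          = ∫ ω, w ω * X ω ∂Q - m * ∫ ω, w ω ∂Q := by
        have h1 : (fun ω => w ω * (X ω - m)) = fun ω => w ω * X ω - m * w ω := by
          funext ω; ring
        rw [h1, integral_sub hwXi (hwi.const_mul m), integral_const_mul]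
      rw [this, hW, hI]; ring
    have hae : (fun ω => w ω * (X ω - m)) =ᵐ[Q] 0 :=
      (integral_eq_zero_iff_of_nonneg hf0 hfi).mp hint0
    have hw0 : w =ᵐ[Q] 0 := by
      filter_upwards [hae] with ω hω
      have hpos : 0 < X ω - m := by linarith [hlb _ (hr ω)]
      rcases mul_eq_zero.mp hω with h | h
      · exact h
      · exact absurd h hpos.ne'
    have : ∫ ω, w ω ∂Q = 0 := by
      rw [integral_congr_ae hw0]; simp
    rw [hW] at this; linarith

/-- A convex function on an interval has a supporting line at every point that
is neither a left nor a right extreme of the interval. -/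
lemma exists_subgradient {s : Set ℝ} {φ : ℝ → ℝ} (hφ : ConvexOn ℝ s φ)
    {t a b : ℝ} (ht : t ∈ s) (ha : a ∈ s) (hb : b ∈ s) (hat : a < t) (htb : t < b) :
    ∃ c : ℝ, ∀ x ∈ s, φ t + c * (x - t) ≤ φ x := by
  set S := {z : ℝ | ∃ x ∈ s, x < t ∧ z = (φ t - φ x) / (t - x)} with hS
  have hne : S.Nonempty := ⟨(φ t - φ a) / (t - a), a, ha, hat, rfl⟩
  have hub : ∀ x ∈ s, t < x → ∀ z ∈ S, z ≤ (φ x - φ t) / (x - t) := by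
    rintro x hx htx z ⟨y, hy, hyt, rfl⟩
    exact hφ.slope_mono_adjacent hy hx hyt htx
  have hbdd : BddAbove S := ⟨(φ b - φ t) / (b - t), fun z hz => hub b hb htb z hz⟩
  refine ⟨sSup S, fun x hx => ?_⟩
  rcases lt_trichotomy x t with h | h | h
  · have h1 : (φ t - φ x) / (t - x) ≤ sSup S := le_csSup hbdd ⟨x, hx, h, rfl⟩
    have h2 : φ t - φ x ≤ sSup S * (t - x) := (div_le_iff₀ (by linarith)).mp h1
    have h3 : sSup S * (x - t) = -(sSup S * (t - x)) := by ring
    linarith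
  · subst h; simp
  · have h1 : sSup S ≤ (φ x - φ t) / (x - t) := csSup_le hne (hub x hx h)
    have h2 : sSup S * (x - t) ≤ φ x - φ t := (le_div_iff₀ (by linarith)).mp h1
    linarith

/-- Weighted Jensen inequality with nonnegative weight `w`. -/
lemma wjensen {Ω : Type*} [MeasurableSpace Ω] (Q : Measure Ω)
    (w X : Ω → ℝ) (hw : ∀ ω, 0 ≤ w ω)
    (hwi : Integrable w Q) (hwXi : Integrable (fun ω => w ω * X ω) Q)
    (s : Set ℝ) (φ : ℝ → ℝ) (hφ : ConvexOn ℝ s φ) (hr : ∀ ω, X ω ∈ s)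
    (hwφi : Integrable (fun ω => w ω * φ (X ω)) Q)
    {W : ℝ} (hW : ∫ ω, w ω ∂Q = W) (hWpos : 0 < W) :
    W * φ ((∫ ω, w ω * X ω ∂Q) / W) ≤ ∫ ω, w ω * φ (X ω) ∂Q := by
  set t := (∫ ω, w ω * X ω ∂Q) / W with htdef
  have hts : t ∈ s := wmean_mem Q w X hw hwi hwXi s hφ.1 hr hW hWpos
  have hI : ∫ ω, w ω * X ω ∂Q = t * W := by
    rw [htdef, div_mul_cancel₀ _ hWpos.ne']
  -- helper for the degenerate cases
  have degen : (fun ω => w ω * (X ω - t)) =ᵐ[Q] 0 →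
      W * φ t ≤ ∫ ω, w ω * φ (X ω) ∂Q := by
    intro hae
    have heq : (fun ω => w ω * φ (X ω)) =ᵐ[Q] (fun ω => w ω * φ t) := by
      filter_upwards [hae] with ω hω
      rcases mul_eq_zero.mp hω with h | h
      · simp only [h, zero_mul]
      · have : X ω = t := by linarith
        rw [this]
    have : ∫ ω, w ω * φ (X ω) ∂Q = W * φ t := by
      rw [integral_congr_ae heq]
      rw [show (fun ω => w ω * φ t) = fun ω => φ t * w ω from by funext ω; ring]
      rw [integral_const_mul, hW]; ring
    linarith
  have hintdiff : ∫ ω, w ω * (X ω - t) ∂Q = 0 := by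
    have h1 : (fun ω => w ω * (X ω - t)) = fun ω => w ω * X ω - t * w ω := by
      funext ω; ring
    rw [h1, integral_sub hwXi (hwi.const_mul t), integral_const_mul, hW, hI]; ring
  have hfidiff : Integrable (fun ω => w ω * (X ω - t)) Q := by
    have h1 : (fun ω => w ω * (X ω - t)) = fun ω => w ω * X ω - t * w ω := by
      funext ω; ring
    rw [h1]; exact hwXi.sub (hwi.const_mul t)
  by_cases hlb : ∃ a ∈ s, a < t
  · by_cases hub : ∃ b ∈ s, t < b
    · obtain ⟨a, ha, hat⟩ := hlb
      obtain ⟨b, hb, htb⟩ := hub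
      obtain ⟨c, hc⟩ := exists_subgradient hφ hts ha hb hat htb
      set L := fun ω => w ω * φ t + c * (w ω * X ω) - c * t * w ω with hL
      have hLi : Integrable L Q :=
        ((hwi.mul_const (φ t)).add (hwXi.const_mul c)).sub (hwi.const_mul (c * t))
      have hA : Integrable (fun ω => w ω * φ t + c * (w ω * X ω)) Q :=
        (hwi.mul_const (φ t)).add (hwXi.const_mul c)
      have hB : Integrable (fun ω => c * t * w ω) Q := hwi.const_mul (c * t)
      have hA1 : Integrable (fun ω => w ω * φ t) Q := hwi.mul_const (φ t)
      have hA2 : Integrable (fun ω => c * (w ω * X ω)) Q := hwXi.const_mul c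
      have hLint : ∫ ω, L ω ∂Q = W * φ t := by
        rw [hL]
        rw [integral_sub hA hB, integral_add hA1 hA2,
          integral_mul_const, integral_const_mul, integral_const_mul, hW, hI]
        ring
      have hle : ∀ ω, L ω ≤ w ω * φ (X ω) := by
        intro ω
        have h1 := mul_le_mul_of_nonneg_left (hc (X ω) (hr ω)) (hw ω)
        have h2 : L ω = w ω * (φ t + c * (X ω - t)) := by rw [hL]; ring
        linarith
      calc W * φ t = ∫ ω, L ω ∂Q := hLint.symm
        _ ≤ ∫ ω, w ω * φ (X ω) ∂Q := integral_mono hLi hwφi hle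
    · push_neg at hub
      apply degen
      have hf0 : ∀ ω, 0 ≤ w ω * (t - X ω) := fun ω =>
        mul_nonneg (hw ω) (by linarith [hub _ (hr ω)])
      have hfi' : Integrable (fun ω => w ω * (t - X ω)) Q := by
        have h1 : (fun ω => w ω * (t - X ω)) = fun ω => -(w ω * (X ω - t)) := by
          funext ω; ring
        rw [h1]; exact hfidiff.neg
      have hi0 : ∫ ω, w ω * (t - X ω) ∂Q = 0 := by
        have h1 : (fun ω => w ω * (t - X ω)) = fun ω => -(w ω * (X ω - t)) := by
          funext ω; ring
        rw [h1, integral_neg, hintdiff, neg_zero]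
      have := (integral_eq_zero_iff_of_nonneg hf0 hfi').mp hi0
      filter_upwards [this] with ω hω
      have : w ω * (t - X ω) = 0 := hω
      have h2 : w ω * (X ω - t) = -(w ω * (t - X ω)) := by ring
      simp only [Pi.zero_apply]
      rw [h2, this, neg_zero]
  · push_neg at hlb
    apply degen
    have hf0 : ∀ ω, 0 ≤ w ω * (X ω - t) := fun ω =>
      mul_nonneg (hw ω) (by linarith [hlb _ (hr ω)])
    exact (integral_eq_zero_iff_of_nonneg hf0 hfidiff).mp hintdiff

theorem dragomir_jensen_upper {Ω : Type*} [MeasurableSpace Ω]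
    (P Q : Measure Ω) [IsProbabilityMeasure P] [IsProbabilityMeasure Q]
    (hPQ : P ≪ Q) (hbdd : essSup (P.rnDeriv Q) Q ≠ ⊤)
    (X : Ω → ℝ) (hXP : Integrable X P) (hXQ : Integrable X Q)
    (s : Set ℝ) (φ : ℝ → ℝ) (hφ : ConvexOn ℝ s φ)
    (hrange : ∀ ω, X ω ∈ s)
    (hφP : Integrable (fun ω => φ (X ω)) P)
    (hφQ : Integrable (fun ω => φ (X ω)) Q) :
    ∫ ω, φ (X ω) ∂P - φ (∫ ω, X ω ∂P) ≤
      (essSup (P.rnDeriv Q) Q).toReal *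
        (∫ ω, φ (X ω) ∂Q - φ (∫ ω, X ω ∂Q)) := by
  set h : Ω → ℝ := fun ω => (P.rnDeriv Q ω).toReal with hhdef
  set M : ℝ := (essSup (P.rnDeriv Q) Q).toReal with hMdef
  have hh0 : ∀ ω, 0 ≤ h ω := fun ω => ENNReal.toReal_nonneg
  have hhi : Integrable h Q := Measure.integrable_toReal_rnDeriv
  have hInt1 : ∫ ω, h ω ∂Q = 1 := by
    rw [hhdef, Measure.integral_toReal_rnDeriv hPQ]
    simp
  have hXPQ : Integrable (fun ω => h ω * X ω) Q := by
    have := (integrable_rnDeriv_smul_iff hPQ (f := X)).mpr hXP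
    simpa [smul_eq_mul] using this
  have hmP : ∫ ω, h ω * X ω ∂Q = ∫ ω, X ω ∂P := by
    have := integral_rnDeriv_smul hPQ (f := X)
    simpa [smul_eq_mul] using this
  have hφPQ : Integrable (fun ω => h ω * φ (X ω)) Q := by
    have := (integrable_rnDeriv_smul_iff hPQ (f := fun ω => φ (X ω))).mpr hφP
    simpa [smul_eq_mul] using this
  have hmφP : ∫ ω, h ω * φ (X ω) ∂Q = ∫ ω, φ (X ω) ∂P := by
    have := integral_rnDeriv_smul hPQ (f := fun ω => φ (X ω))
    simpa [smul_eq_mul] using this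
  have hhle : ∀ᵐ ω ∂Q, h ω ≤ M := by
    filter_upwards [Measure.rnDeriv_lt_top P Q, ENNReal.ae_le_essSup (P.rnDeriv Q)]
      with ω h1 h2
    exact ENNReal.toReal_mono hbdd h2
  have hM1 : (1:ℝ) ≤ M := by
    have h1M : (1:ℝ≥0∞) ≤ essSup (P.rnDeriv Q) Q := by
      calc (1:ℝ≥0∞) = ∫⁻ ω, P.rnDeriv Q ω ∂Q := by
            rw [Measure.lintegral_rnDeriv hPQ]; simp
        _ ≤ ∫⁻ _, essSup (P.rnDeriv Q) Q ∂Q :=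
            lintegral_mono_ae (ENNReal.ae_le_essSup (P.rnDeriv Q))
        _ = essSup (P.rnDeriv Q) Q := by simp
    have := ENNReal.toReal_mono hbdd h1M
    simpa using this
  -- membership of the means
  have hmPs : ∫ ω, X ω ∂P ∈ s := by
    have := wmean_mem Q h X hh0 hhi hXPQ s hφ.1 hrange hInt1 one_pos
    rwa [div_one, hmP] at this
  have h1i : Integrable (fun _ : Ω => (1:ℝ)) Q := integrable_const 1
  have h1Xi : Integrable (fun ω => (1:ℝ) * X ω) Q := by simpa using hXQ
  have h1int : ∫ _, (1:ℝ) ∂Q = 1 := by simp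
  have hmQs : ∫ ω, X ω ∂Q ∈ s := by
    have := wmean_mem Q (fun _ => (1:ℝ)) X (fun _ => zero_le_one) h1i h1Xi s hφ.1
      hrange h1int one_pos
    simpa using this
  -- classical Jensen for Q
  have hJQ : 0 ≤ ∫ ω, φ (X ω) ∂Q - φ (∫ ω, X ω ∂Q) := by
    have h1φi : Integrable (fun ω => (1:ℝ) * φ (X ω)) Q := by simpa using hφQ
    have := wjensen Q (fun _ => (1:ℝ)) X (fun _ => zero_le_one) h1i h1Xi s φ hφ
      hrange h1φi h1int one_pos
    simp only [one_mul, div_one] at this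
    linarith
  -- core inequality for any strict bound M' > 1
  have core : ∀ M' : ℝ, 1 < M' → (∀ᵐ ω ∂Q, h ω ≤ M') →
      ∫ ω, φ (X ω) ∂P - φ (∫ ω, X ω ∂P) ≤
        M' * (∫ ω, φ (X ω) ∂Q - φ (∫ ω, X ω ∂Q)) := by
    intro M' hM' hle'
    have hM'0 : (0:ℝ) < M' := by linarith
    have hW0 : (0:ℝ) < M' - 1 := by linarith
    set w : Ω → ℝ := fun ω => max (M' - h ω) 0 with hwdef
    have hw0 : ∀ ω, 0 ≤ w ω := fun ω => le_max_right _ _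
    have hwae : w =ᵐ[Q] fun ω => M' - h ω := by
      filter_upwards [hle'] with ω hω
      exact max_eq_left (by linarith)
    have hwi : Integrable w Q :=
      ((integrable_const M').sub hhi).congr hwae.symm
    have hwXi : Integrable (fun ω => w ω * X ω) Q := by
      apply ((hXQ.const_mul M').sub hXPQ).congr
      filter_upwards [hwae] with ω hω
      show M' * X ω - h ω * X ω = w ω * X ω
      rw [hω]; ring
    have hwφi : Integrable (fun ω => w ω * φ (X ω)) Q := by
      apply ((hφQ.const_mul M').sub hφPQ).congr
      filter_upwards [hwae] with ω hω
      show M' * φ (X ω) - h ω * φ (X ω) = w ω * φ (X ω)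
      rw [hω]; ring
    have hWint : ∫ ω, w ω ∂Q = M' - 1 := by
      rw [integral_congr_ae hwae, integral_sub (integrable_const M') hhi, hInt1]
      simp
    have hwXint : ∫ ω, w ω * X ω ∂Q = M' * (∫ ω, X ω ∂Q) - ∫ ω, X ω ∂P := by
      have : (fun ω => w ω * X ω) =ᵐ[Q] fun ω => M' * X ω - h ω * X ω := by
        filter_upwards [hwae] with ω hω
        rw [hω]; ring
      rw [integral_congr_ae this, integral_sub (hXQ.const_mul M') hXPQ,
        integral_const_mul, hmP]
    have hwφint : ∫ ω, w ω * φ (X ω) ∂Q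
        = M' * (∫ ω, φ (X ω) ∂Q) - ∫ ω, φ (X ω) ∂P := by
      have : (fun ω => w ω * φ (X ω)) =ᵐ[Q] fun ω => M' * φ (X ω) - h ω * φ (X ω) := by
        filter_upwards [hwae] with ω hω
        rw [hω]; ring
      rw [integral_congr_ae this, integral_sub (hφQ.const_mul M') hφPQ,
        integral_const_mul, hmφP]
    set mR : ℝ := (∫ ω, w ω * X ω ∂Q) / (M' - 1) with hmRdef
    have hmRs : mR ∈ s :=
      wmean_mem Q w X hw0 hwi hwXi s hφ.1 hrange hWint hW0
    have hjensenR : (M' - 1) * φ mR ≤ ∫ ω, w ω * φ (X ω) ∂Q :=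
      wjensen Q w X hw0 hwi hwXi s φ hφ hrange hwφi hWint hW0
    -- convexity at the Q-mean
    have hcomb : (1 / M') * (∫ ω, X ω ∂P) + ((M' - 1) / M') * mR = ∫ ω, X ω ∂Q := by
      rw [hmRdef, hwXint]
      field_simp
      ring
    have hconv := hφ.2 hmPs hmRs (show (0:ℝ) ≤ 1 / M' by positivity)
      (show (0:ℝ) ≤ (M' - 1) / M' by positivity) (by field_simp; ring)
    simp only [smul_eq_mul] at hconv
    rw [hcomb] at hconv
    have hB : M' * φ (∫ ω, X ω ∂Q) ≤ φ (∫ ω, X ω ∂P) + (M' - 1) * φ mR := by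
      have := mul_le_mul_of_nonneg_left hconv hM'0.le
      have hexp : M' * (1 / M' * φ (∫ ω, X ω ∂P) + (M' - 1) / M' * φ mR)
          = φ (∫ ω, X ω ∂P) + (M' - 1) * φ mR := by
        field_simp
        try ring
      linarith
    rw [hwφint] at hjensenR
    rw [mul_sub]
    linarith
  -- pass to the limit M' → M
  by_contra hc
  push_neg at hc
  set JQ := ∫ ω, φ (X ω) ∂Q - φ (∫ ω, X ω ∂Q) with hJQdef
  set JP := ∫ ω, φ (X ω) ∂P - φ (∫ ω, X ω ∂P) with hJPdef
  clear_value JQ JP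
  set ε := (JP - M * JQ) / 2 with hεdef
  clear_value ε
  have hε : 0 < ε := by
    rw [hεdef]
    have : M * JQ < JP := hc
    linarith
  set δ := ε / (JQ + 1) with hδdef
  clear_value δ
  have hδ : 0 < δ := by
    rw [hδdef]
    exact div_pos hε (by linarith)
  have hcore := core (M + δ) (by linarith) (by
    filter_upwards [hhle] with ω hω; linarith)
  have hδJQ : δ * JQ ≤ ε := by
    rw [hδdef, div_mul_eq_mul_div, div_le_iff₀ (by linarith : (0:ℝ) < JQ + 1)]
    nlinarith
  have hexp : (M + δ) * JQ = M * JQ + δ * JQ := by ring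
  have : JP ≤ M * JQ + ε := by
    calc JP ≤ (M + δ) * JQ := hcore
      _ = M * JQ + δ * JQ := hexp
      _ ≤ M * JQ + ε := by linarith
  rw [hεdef] at this
  linarith
end

section
/- Let (Ω, 𝒜) be a measurable space, P and Q probability measures with P ≪ Q, X : Ω → ℝ integrable with respect to both P and Q, and φ convex on an interval containing the range of X. If ∫ φ(X) dQ = φ(∫ X dQ), then ∫ φ(X) dP = φ(∫ X dP). -/
open MeasureTheory Filter

/-- If an integrable random variable on a probability space is not a.e. equal to its mean,
then it takes values strictly below and strictly above its mean on sets of positive measure. -/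
lemma both_sides_of_mean {Ω : Type*} [MeasurableSpace Ω] (μ : Measure Ω)
    [IsProbabilityMeasure μ] (X : Ω → ℝ) (hX : Integrable X μ)
    (hne : ¬ (X =ᵐ[μ] fun _ => ∫ ω, X ω ∂μ)) :
    μ {ω | X ω < ∫ ω, X ω ∂μ} ≠ 0 ∧ μ {ω | (∫ ω, X ω ∂μ) < X ω} ≠ 0 := by
  set m := ∫ ω, X ω ∂μ with hm
  constructor
  · intro h0
    have hle : ∀ᵐ ω ∂μ, m ≤ X ω := by
      rw [ae_iff]; simpa [not_le] using h0
    have hint : Integrable (fun ω => X ω - m) μ := hX.sub (integrable_const m)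
    have hz : ∫ ω, (X ω - m) ∂μ = 0 := by
      rw [integral_sub hX (integrable_const m)]
      simp [← hm]
    have h := (integral_eq_zero_iff_of_nonneg_ae
      (by filter_upwards [hle] with ω h; simp only [Pi.zero_apply]; linarith) hint).mp hz
    exact hne (by filter_upwards [h] with ω h
                  have h' : X ω - m = 0 := h
                  exact sub_eq_zero.mp h')
  · intro h0
    have hle : ∀ᵐ ω ∂μ, X ω ≤ m := by
      rw [ae_iff]; simpa [not_le] using h0
    have hint : Integrable (fun ω => m - X ω) μ := (integrable_const m).sub hX
    have hz : ∫ ω, (m - X ω) ∂μ = 0 := by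
      rw [integral_sub (integrable_const m) hX]
      simp [← hm]
    have h := (integral_eq_zero_iff_of_nonneg_ae
      (by filter_upwards [hle] with ω h; simp only [Pi.zero_apply]; linarith) hint).mp hz
    exact hne (by filter_upwards [h] with ω h
                  have h' : m - X ω = 0 := h
                  exact (sub_eq_zero.mp h').symm)

theorem jensen_equality_transfer {Ω : Type*} [MeasurableSpace Ω]
    (P Q : Measure Ω) [IsProbabilityMeasure P] [IsProbabilityMeasure Q]
    (hPQ : P ≪ Q)
    (X : Ω → ℝ) (hXP : Integrable X P) (hXQ : Integrable X Q)
    (s : Set ℝ) (φ : ℝ → ℝ) (hφ : ConvexOn ℝ s φ)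
    (hrange : ∀ ω, X ω ∈ s)
    (hφQ : Integrable (fun ω => φ (X ω)) Q)
    (heq : ∫ ω, φ (X ω) ∂Q = φ (∫ ω, X ω ∂Q)) :
    ∫ ω, φ (X ω) ∂P = φ (∫ ω, X ω ∂P) := by
  set m := ∫ ω, X ω ∂Q with hm
  by_cases hc : X =ᵐ[Q] fun _ => m
  · -- X is a.e. constant under Q, hence under P
    have hcP : X =ᵐ[P] fun _ => m := hPQ.ae_le hc
    have h1 : ∫ ω, X ω ∂P = m := by
      rw [integral_congr_ae hcP]; simp
    have h2 : ∫ ω, φ (X ω) ∂P = φ m := by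
      have : (fun ω => φ (X ω)) =ᵐ[P] fun _ => φ m := by
        filter_upwards [hcP] with ω h
        simp only [h]
      rw [integral_congr_ae this]; simp
    rw [h1, h2]
  · obtain ⟨hlt, hgt⟩ := both_sides_of_mean Q X hXQ hc
    obtain ⟨ωa, ha⟩ := nonempty_of_measure_ne_zero hlt
    obtain ⟨ωb, hb⟩ := nonempty_of_measure_ne_zero hgt
    set a := X ωa with hadef
    set b := X ωb with hbdef
    have has : a ∈ s := hrange ωa
    have hbs : b ∈ s := hrange ωb
    have ham : a < m := ha
    have hmb : m < b := hb
    have hms : m ∈ s := hφ.1.ordConnected.out has hbs ⟨le_of_lt ham, le_of_lt hmb⟩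
    -- the slope function and supporting slope
    set sl : ℝ → ℝ := fun x => (φ x - φ m) / (x - m) with hsl
    set T : Set ℝ := sl '' {y | y ∈ s ∧ m < y} with hT
    have hTne : T.Nonempty := ⟨sl b, ⟨b, ⟨hbs, hmb⟩, rfl⟩⟩
    have hbdd : sl a ∈ lowerBounds T := by
      rintro _ ⟨y, ⟨hys, hmy⟩, rfl⟩
      exact hφ.secant_mono hms has hys (ne_of_lt ham) (ne_of_gt hmy)
        (le_of_lt (lt_trans ham hmy))
    set c := sInf T with hcdef
    have hsupp : ∀ x ∈ s, φ m + c * (x - m) ≤ φ x := by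
      intro x hxs
      rcases lt_trichotomy x m with hxm | hxm | hxm
      · have h1 : sl x ≤ c := by
          apply le_csInf hTne
          rintro _ ⟨y, ⟨hys, hmy⟩, rfl⟩
          exact hφ.secant_mono hms hxs hys (ne_of_lt hxm) (ne_of_gt hmy)
            (le_of_lt (lt_trans hxm hmy))
        have hx0 : x - m < 0 := by linarith
        have := (div_le_iff_of_neg hx0).mp h1
        linarith
      · subst hxm; simp
      · have h1 : c ≤ sl x := csInf_le ⟨sl a, hbdd⟩ ⟨x, ⟨hxs, hxm⟩, rfl⟩
        have hx0 : 0 < x - m := by linarith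
        have := (le_div_iff₀ hx0).mp h1
        linarith
    -- the affine minorant equals φ∘X a.e. under Q
    set g : Ω → ℝ := fun ω => φ m + c * (X ω - m) with hg
    have hgQ : Integrable g Q :=
      (integrable_const (φ m)).add ((hXQ.sub (integrable_const m)).const_mul c)
    have hgint : ∀ (μ : Measure Ω) [IsProbabilityMeasure μ], Integrable X μ →
        ∫ ω, g ω ∂μ = φ m + c * ((∫ ω, X ω ∂μ) - m) := by
      intro μ _ hXμ
      have e1 : Integrable (fun ω => c * X ω) μ := hXμ.const_mul c
      calc ∫ ω, g ω ∂μ = ∫ ω, ((φ m - c * m) + c * X ω) ∂μ := by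
            congr 1; funext ω; simp only [hg]; ring
        _ = (φ m - c * m) + c * ∫ ω, X ω ∂μ := by
            rw [integral_add (integrable_const _) e1, integral_const_mul, integral_const]
            simp
        _ = φ m + c * ((∫ ω, X ω ∂μ) - m) := by ring
    have hfz : ∫ ω, (φ (X ω) - g ω) ∂Q = 0 := by
      rw [integral_sub hφQ hgQ, hgint Q hXQ, heq, ← hm]
      ring
    have hfnn : ∀ᵐ ω ∂Q, 0 ≤ φ (X ω) - g ω := by
      refine Eventually.of_forall fun ω => ?_
      have := hsupp (X ω) (hrange ω)
      simp only [hg]; linarith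
    have haeQ : (fun ω => φ (X ω) - g ω) =ᵐ[Q] 0 :=
      (integral_eq_zero_iff_of_nonneg_ae
        (by filter_upwards [hfnn] with ω h; simpa using h) (hφQ.sub hgQ)).mp hfz
    have haeQ' : (fun ω => φ (X ω)) =ᵐ[Q] g := by
      filter_upwards [haeQ] with ω h
      have : φ (X ω) - g ω = 0 := h
      linarith
    have haeP : (fun ω => φ (X ω)) =ᵐ[P] g := hPQ.ae_le haeQ'
    have hφP : Integrable (fun ω => φ (X ω)) P := (Integrable.congr
      ((integrable_const (φ m)).add ((hXP.sub (integrable_const m)).const_mul c))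
      haeP.symm)
    set m' := ∫ ω, X ω ∂P with hm'
    have hIP : ∫ ω, φ (X ω) ∂P = φ m + c * (m' - m) := by
      rw [integral_congr_ae haeP, hgint P hXP]
    rw [hIP]
    -- It remains to show φ m' = φ m + c * (m' - m).
    have hZae : ∀ᵐ ω ∂P, φ (X ω) = φ m + c * (X ω - m) := haeP
    by_cases hcP : X =ᵐ[P] fun _ => m'
    · obtain ⟨ω, h1, h2⟩ := (hZae.and hcP).exists
      rw [h2] at h1
      rw [h1]
    · obtain ⟨hlt', hgt'⟩ := both_sides_of_mean P X hXP hcP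
      rw [← hm'] at hlt' hgt'
      have hfa : ∃ ω, X ω < m' ∧ φ (X ω) = φ m + c * (X ω - m) := by
        have h1 : ∃ᵐ ω ∂P, X ω < m' := frequently_ae_mem_iff.mpr hlt'
        exact (h1.and_eventually hZae).exists
      have hfb : ∃ ω, m' < X ω ∧ φ (X ω) = φ m + c * (X ω - m) := by
        have h1 : ∃ᵐ ω ∂P, m' < X ω := frequently_ae_mem_iff.mpr hgt'
        exact (h1.and_eventually hZae).exists
      obtain ⟨ωa', hA, hAeq⟩ := hfa
      obtain ⟨ωb', hB, hBeq⟩ := hfb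
      set a' := X ωa'
      set b' := X ωb'
      have ha's : a' ∈ s := hrange ωa'
      have hb's : b' ∈ s := hrange ωb'
      have hab : a' < b' := lt_trans hA hB
      set t : ℝ := (b' - m') / (b' - a') with ht
      have hden : 0 < b' - a' := by linarith
      have ht0 : 0 ≤ t := div_nonneg (by linarith) (by linarith)
      have ht1 : 0 ≤ 1 - t := by
        have : t ≤ 1 := (div_le_one hden).mpr (by linarith)
        linarith
      have hcomb : t * a' + (1 - t) * b' = m' := by
        field_simp [ht]
        have key : t * (b' - a') = b' - m' := by rw [ht]; exact div_mul_cancel₀ _ hden.ne'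
        linear_combination -key
      have hm's : m' ∈ s := hφ.1.ordConnected.out ha's hb's ⟨le_of_lt hA, le_of_lt hB⟩
      have hle1 : φ m' ≤ t * φ a' + (1 - t) * φ b' := by
        have := hφ.2 ha's hb's ht0 ht1 (by ring : t + (1 - t) = 1)
        simpa [smul_eq_mul, hcomb] using this
      have hle2 : t * φ a' + (1 - t) * φ b' = φ m + c * (m' - m) := by
        rw [hAeq, hBeq]
        have : t * (φ m + c * (a' - m)) + (1 - t) * (φ m + c * (b' - m))
            = φ m + c * ((t * a' + (1 - t) * b') - m) := by ring
        rw [this, hcomb]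
      have hge := hsupp m' hm's
      linarith
end

section
/- Let P and Q be probability measures on (Ω, 𝒜) with P ≪ Q, X : Ω → ℝ integrable with respect to both P and Q, and φ convex on an interval containing the range of X with φ(X) integrable with respect to both P and Q. Then (ess inf_Q dP/dQ) · ( ∫ φ(X) dQ − φ(∫ X dQ) ) ≤ ∫ φ(X) dP − φ(∫ X dP). -/
open MeasureTheory
open scoped NNReal ENNReal

/-- Jensen's inequality for a convex function on an arbitrary convex subset of ℝ,
together with membership of the mean in the set. -/
theorem jensen_prob {Ω : Type*} [MeasurableSpace Ω]
    (ν : Measure Ω) [IsProbabilityMeasure ν]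
    (X : Ω → ℝ) (hX : Integrable X ν)
    (s : Set ℝ) (φ : ℝ → ℝ) (hφ : ConvexOn ℝ s φ)
    (hr : ∀ ω, X ω ∈ s)
    (hφX : Integrable (fun ω => φ (X ω)) ν) :
    (∫ ω, X ω ∂ν) ∈ s ∧ φ (∫ ω, X ω ∂ν) ≤ ∫ ω, φ (X ω) ∂ν := by
  set c := ∫ ω, X ω ∂ν with hc
  have hν : (ν : Measure Ω) ≠ 0 := IsProbabilityMeasure.ne_zero ν
  haveI : NeZero ν := ⟨hν⟩
  -- existence of a point ≤ c
  have hlow : ∃ ω, X ω ≤ c := by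
    by_contra h
    push_neg at h
    have hpos : ∀ ω, 0 < X ω - c := fun ω => sub_pos.mpr (h ω)
    have hint : Integrable (fun ω => X ω - c) ν := hX.sub (integrable_const c)
    have hz : ∫ ω, (X ω - c) ∂ν = 0 := by
      rw [integral_sub hX (integrable_const c), integral_const]
      simp [hc]
    have := (integral_eq_zero_iff_of_nonneg (fun ω => (hpos ω).le) hint).mp hz
    obtain ⟨ω, hω⟩ := this.exists
    exact absurd hω (ne_of_gt (hpos ω))
  have hhigh : ∃ ω, c ≤ X ω := by
    by_contra h
    push_neg at h
    have hpos : ∀ ω, 0 < c - X ω := fun ω => sub_pos.mpr (h ω)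
    have hint : Integrable (fun ω => c - X ω) ν := (integrable_const c).sub hX
    have hz : ∫ ω, (c - X ω) ∂ν = 0 := by
      rw [integral_sub (integrable_const c) hX, integral_const]
      simp [hc]
    have := (integral_eq_zero_iff_of_nonneg (fun ω => (hpos ω).le) hint).mp hz
    obtain ⟨ω, hω⟩ := this.exists
    exact absurd hω (ne_of_gt (hpos ω))
  obtain ⟨ω₁, hω₁⟩ := hlow
  obtain ⟨ω₂, hω₂⟩ := hhigh
  have hcs : c ∈ s := hφ.1.ordConnected.out (hr ω₁) (hr ω₂) ⟨hω₁, hω₂⟩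
  refine ⟨hcs, ?_⟩
  by_cases hae : ∀ᵐ ω ∂ν, X ω = c
  · have : (fun ω => φ (X ω)) =ᵐ[ν] fun _ => φ c := by filter_upwards [hae] with ω h; rw [h]
    rw [integral_congr_ae this, integral_const]
    simp
  · -- there exist points strictly above and strictly below c
    have hb : ∃ ω, c < X ω := by
      by_contra h
      push_neg at h
      have hnn : ∀ ω, 0 ≤ c - X ω := fun ω => sub_nonneg.mpr (h ω)
      have hint : Integrable (fun ω => c - X ω) ν := (integrable_const c).sub hX
      have hz : ∫ ω, (c - X ω) ∂ν = 0 := by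
        rw [integral_sub (integrable_const c) hX, integral_const]; simp [hc]
      have := (integral_eq_zero_iff_of_nonneg hnn hint).mp hz
      exact hae (by filter_upwards [this] with ω h2; linarith [sub_eq_zero.mp h2])
    have ha : ∃ ω, X ω < c := by
      by_contra h
      push_neg at h
      have hnn : ∀ ω, 0 ≤ X ω - c := fun ω => sub_nonneg.mpr (h ω)
      have hint : Integrable (fun ω => X ω - c) ν := hX.sub (integrable_const c)
      have hz : ∫ ω, (X ω - c) ∂ν = 0 := by
        rw [integral_sub hX (integrable_const c), integral_const]; simp [hc]
      have := (integral_eq_zero_iff_of_nonneg hnn hint).mp hz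
      exact hae (by filter_upwards [this] with ω h2; linarith [sub_eq_zero.mp h2])
    obtain ⟨ωa, hωa⟩ := ha
    obtain ⟨ωb, hωb⟩ := hb
    set a := X ωa
    set b := X ωb
    -- subgradient slope
    set T : Set ℝ := {u | ∃ y ∈ s, c < y ∧ u = (φ y - φ c) / (y - c)} with hT
    have hTne : T.Nonempty := ⟨(φ b - φ c) / (b - c), b, hr ωb, hωb, rfl⟩
    have hTbdd : BddBelow T := by
      refine ⟨(φ c - φ a) / (c - a), ?_⟩
      rintro t ⟨y, hy, hcy, rfl⟩
      exact hφ.slope_mono_adjacent (hr ωa) hy hωa hcy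
    set t := sInf T with ht
    have key : ∀ x ∈ s, φ c + t * (x - c) ≤ φ x := by
      intro x hx
      rcases lt_trichotomy x c with h | h | h
      · have h1 : (φ c - φ x) / (c - x) ≤ t := by
          apply le_csInf hTne
          rintro u ⟨y, hy, hcy, rfl⟩
          exact hφ.slope_mono_adjacent hx hy h hcy
        have hcx : 0 < c - x := sub_pos.mpr h
        rw [div_le_iff₀ hcx] at h1
        nlinarith
      · simp [h]
      · have h1 : t ≤ (φ x - φ c) / (x - c) := csInf_le hTbdd ⟨x, hx, h, rfl⟩
        have hcx : 0 < x - c := sub_pos.mpr h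
        rw [le_div_iff₀ hcx] at h1
        nlinarith
    have hmono : ∀ ω, φ c + t * (X ω - c) ≤ φ (X ω) := fun ω => key _ (hr ω)
    have hint2 : Integrable (fun ω => t * (X ω - c)) ν := (hX.sub (integrable_const c)).const_mul t
    have hint3 : Integrable (fun ω => X ω - c) ν := hX.sub (integrable_const c)
    have hintL : Integrable (fun ω => φ c + t * (X ω - c)) ν := (integrable_const (φ c)).add hint2
    calc φ c = ∫ ω, (φ c + t * (X ω - c)) ∂ν := by
          rw [integral_add (integrable_const _) hint2, integral_const_mul,
            integral_sub hX (integrable_const c), integral_const]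
          simp [hc]
      _ ≤ ∫ ω, φ (X ω) ∂ν := integral_mono hintL hφX fun ω => hmono ω

theorem dragomir_jensen_lower {Ω : Type*} [MeasurableSpace Ω]
    (P Q : Measure Ω) [IsProbabilityMeasure P] [IsProbabilityMeasure Q]
    (hPQ : P ≪ Q)
    (X : Ω → ℝ) (hXP : Integrable X P) (hXQ : Integrable X Q)
    (s : Set ℝ) (φ : ℝ → ℝ) (hφ : ConvexOn ℝ s φ)
    (hrange : ∀ ω, X ω ∈ s)
    (hφP : Integrable (fun ω => φ (X ω)) P)
    (hφQ : Integrable (fun ω => φ (X ω)) Q) :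
    (essInf (P.rnDeriv Q) Q).toReal *
        (∫ ω, φ (X ω) ∂Q - φ (∫ ω, X ω ∂Q)) ≤
      ∫ ω, φ (X ω) ∂P - φ (∫ ω, X ω ∂P) := by
  set f : Ω → ℝ := fun ω => (P.rnDeriv Q ω).toReal with hf
  set r : ℝ := (essInf (P.rnDeriv Q) Q).toReal with hrdef
  have hr0 : 0 ≤ r := ENNReal.toReal_nonneg
  have hfmeas : Measurable f := (Measure.measurable_rnDeriv P Q).ennreal_toReal
  -- f ≥ r a.e.
  have hfr : ∀ᵐ ω ∂Q, r ≤ f ω := by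
    filter_upwards [ae_essInf_le (f := P.rnDeriv Q) (μ := Q), Measure.rnDeriv_lt_top P Q]
      with ω h1 h2
    exact ENNReal.toReal_mono h2.ne h1
  have hf_int : Integrable f Q := Measure.integrable_toReal_rnDeriv
  have hf_one : ∫ ω, f ω ∂Q = 1 := by
    rw [hf]
    simp [Measure.integral_toReal_rnDeriv hPQ]
  -- transfer lemmas
  have hfX_int : Integrable (fun ω => f ω * X ω) Q := by
    have := (integrable_rnDeriv_smul_iff (f := X) hPQ).mpr hXP
    simpa [smul_eq_mul] using this
  have hfφ_int : Integrable (fun ω => f ω * φ (X ω)) Q := by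
    have := (integrable_rnDeriv_smul_iff (f := fun ω => φ (X ω)) hPQ).mpr hφP
    simpa [smul_eq_mul] using this
  have hfX_eq : ∫ ω, f ω * X ω ∂Q = ∫ ω, X ω ∂P := by
    have := integral_rnDeriv_smul (f := X) hPQ
    simpa [smul_eq_mul] using this
  have hfφ_eq : ∫ ω, f ω * φ (X ω) ∂Q = ∫ ω, φ (X ω) ∂P := by
    have := integral_rnDeriv_smul (f := fun ω => φ (X ω)) hPQ
    simpa [smul_eq_mul] using this
  set g : Ω → ℝ := fun ω => f ω - r with hg
  have hg0 : ∀ᵐ ω ∂Q, 0 ≤ g ω := by filter_upwards [hfr] with ω h; simp [hg, h]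
  have hg_int : Integrable g Q := hf_int.sub (integrable_const r)
  have hgQ : ∫ ω, g ω ∂Q = 1 - r := by
    rw [hg]
    rw [integral_sub hf_int (integrable_const r), hf_one, integral_const]
    simp
  set m : ℝ := 1 - r with hm
  have hm0 : 0 ≤ m := hgQ ▸ integral_nonneg_of_ae hg0
  have hgX_int : Integrable (fun ω => g ω * X ω) Q := by
    have : (fun ω => g ω * X ω) = fun ω => f ω * X ω - r * X ω := by
      funext ω; simp [hg]; ring
    rw [this]
    exact hfX_int.sub (hXQ.const_mul r)
  have hgφ_int : Integrable (fun ω => g ω * φ (X ω)) Q := by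
    have : (fun ω => g ω * φ (X ω)) = fun ω => f ω * φ (X ω) - r * φ (X ω) := by
      funext ω; simp [hg]; ring
    rw [this]
    exact hfφ_int.sub (hφQ.const_mul r)
  have hgX_eq : ∫ ω, g ω * X ω ∂Q = ∫ ω, X ω ∂P - r * ∫ ω, X ω ∂Q := by
    have : (fun ω => g ω * X ω) = fun ω => f ω * X ω - r * X ω := by
      funext ω; simp [hg]; ring
    rw [this, integral_sub hfX_int (hXQ.const_mul r), hfX_eq, integral_const_mul]
  have hgφ_eq : ∫ ω, g ω * φ (X ω) ∂Q = ∫ ω, φ (X ω) ∂P - r * ∫ ω, φ (X ω) ∂Q := by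
    have : (fun ω => g ω * φ (X ω)) = fun ω => f ω * φ (X ω) - r * φ (X ω) := by
      funext ω; simp [hg]; ring
    rw [this, integral_sub hfφ_int (hφQ.const_mul r), hfφ_eq, integral_const_mul]
  -- q ∈ s
  have hqs : (∫ ω, X ω ∂Q) ∈ s := (jensen_prob Q X hXQ s φ hφ hrange hφQ).1
  rcases eq_or_lt_of_le hm0 with hm0' | hmpos
  · -- m = 0 : g = 0 a.e., r = 1, P-integrals = Q-integrals
    have hgz : g =ᵐ[Q] 0 := by
      have : ∫ ω, g ω ∂Q = 0 := by rw [hgQ]; exact hm0'.symm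
      exact (integral_eq_zero_iff_of_nonneg_ae hg0 hg_int).mp this
    have hr1 : r = 1 := by rw [hm] at hm0'; linarith
    have hX_eq : ∫ ω, X ω ∂P = ∫ ω, X ω ∂Q := by
      have h0 : ∫ ω, g ω * X ω ∂Q = 0 := by
        apply integral_eq_zero_of_ae
        filter_upwards [hgz] with ω h; simp [h]
      rw [hgX_eq, hr1] at h0; linarith
    have hφ_eq : ∫ ω, φ (X ω) ∂P = ∫ ω, φ (X ω) ∂Q := by
      have h0 : ∫ ω, g ω * φ (X ω) ∂Q = 0 := by
        apply integral_eq_zero_of_ae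
        filter_upwards [hgz] with ω h; simp [h]
      rw [hgφ_eq, hr1] at h0; linarith
    rw [hr1, hX_eq, hφ_eq]
    linarith
  · -- m > 0
    set d : Ω → ℝ≥0 := fun ω => Real.toNNReal (g ω / m) with hd
    have hd_meas : Measurable d := ((hfmeas.sub measurable_const).div_const m).real_toNNReal
    set ν : Measure Ω := Q.withDensity (fun ω => (d ω : ℝ≥0∞)) with hν
    have hgm_int : Integrable (fun ω => g ω / m) Q := hg_int.div_const m
    have hgm0 : ∀ᵐ ω ∂Q, 0 ≤ g ω / m := by
      filter_upwards [hg0] with ω h; exact div_nonneg h hm0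
    haveI hνprob : IsProbabilityMeasure ν := by
      constructor
      rw [hν, withDensity_apply _ MeasurableSet.univ, setLIntegral_univ]
      have : ∫⁻ ω, (d ω : ℝ≥0∞) ∂Q = ∫⁻ ω, ENNReal.ofReal (g ω / m) ∂Q := rfl
      rw [this, ← ofReal_integral_eq_lintegral_ofReal hgm_int hgm0, integral_div, hgQ,
        div_self (ne_of_gt hmpos)]
      simp
    -- transfer to ν
    have hsmul_eq : ∀ (h : Ω → ℝ), (fun ω => d ω • h ω)
        =ᵐ[Q] fun ω => (g ω / m) * h ω := by
      intro h
      filter_upwards [hgm0] with ω h0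
      simp [hd, NNReal.smul_def, Real.coe_toNNReal _ h0]
    have hint_transfer : ∀ (h : Ω → ℝ), Integrable (fun ω => (g ω / m) * h ω) Q →
        Integrable h ν := by
      intro h hint
      rw [hν, integrable_withDensity_iff_integrable_smul hd_meas]
      exact hint.congr (hsmul_eq h).symm
    have hXν : Integrable X ν := by
      apply hint_transfer
      have : (fun ω => (g ω / m) * X ω) = fun ω => (g ω * X ω) / m := by
        funext ω; ring
      rw [this]; exact hgX_int.div_const m
    have hφν : Integrable (fun ω => φ (X ω)) ν := by
      apply hint_transfer
      have : (fun ω => (g ω / m) * φ (X ω)) = fun ω => (g ω * φ (X ω)) / m := by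
        funext ω; ring
      rw [this]; exact hgφ_int.div_const m
    have hint_eq : ∀ (h : Ω → ℝ), ∫ ω, h ω ∂ν = ∫ ω, (g ω / m) * h ω ∂Q := by
      intro h
      rw [hν, integral_withDensity_eq_integral_smul hd_meas]
      exact integral_congr_ae (hsmul_eq h)
    have hXν_eq : ∫ ω, X ω ∂ν = (∫ ω, X ω ∂P - r * ∫ ω, X ω ∂Q) / m := by
      rw [hint_eq X, ← hgX_eq, ← integral_div]
      congr 1; funext ω; ring
    have hφν_eq : ∫ ω, φ (X ω) ∂ν
        = (∫ ω, φ (X ω) ∂P - r * ∫ ω, φ (X ω) ∂Q) / m := by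
      rw [hint_eq (fun ω => φ (X ω)), ← hgφ_eq, ← integral_div]
      congr 1; funext ω; ring
    obtain ⟨hcs, hjen⟩ := jensen_prob ν X hXν s φ hφ hrange hφν
    set c : ℝ := ∫ ω, X ω ∂ν with hcdef
    set p : ℝ := ∫ ω, X ω ∂P with hp
    set q : ℝ := ∫ ω, X ω ∂Q with hq
    have hpc : p = m * c + r * q := by
      rw [hXν_eq]
      field_simp
      ring
    have hconv : φ p ≤ m * φ c + r * φ q := by
      have := hφ.2 hcs hqs hm0 hr0 (by rw [hm]; ring)
      rw [smul_eq_mul, smul_eq_mul, smul_eq_mul, smul_eq_mul] at this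
      rw [hpc]
      exact this
    have hjen' : m * φ c ≤ ∫ ω, φ (X ω) ∂P - r * ∫ ω, φ (X ω) ∂Q := by
      rw [hφν_eq] at hjen
      exact (le_div_iff₀' hmpos).mp hjen
    linarith
end

section
/- Let P and Q be probability measures on (Ω, 𝒜) with P ≪ Q and dP/dQ essentially bounded, X : Ω → ℝ integrable with respect to both P and Q, and φ a real-valued concave function on an interval containing the range of X, with φ(X) integrable with respect to both P and Q. Then φ(∫ X dP) − ∫ φ(X) dP ≤ ‖dP/dQ‖_∞ · ( φ(∫ X dQ) − ∫ φ(X) dQ ). -/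
open MeasureTheory

lemma concave_supporting_line {s : Set ℝ} {φ : ℝ → ℝ} (hφ : ConcaveOn ℝ s φ)
    {x₁ μ x₂ : ℝ} (h1 : x₁ ∈ s) (h2 : x₂ ∈ s) (hlt1 : x₁ < μ) (hlt2 : μ < x₂) :
    ∃ c : ℝ, ∀ y ∈ s, φ y ≤ φ μ + c * (y - μ) := by
  have hμs : μ ∈ s := hφ.1.ordConnected.out h1 h2 ⟨hlt1.le, hlt2.le⟩
  set S : Set ℝ := {r | ∃ y ∈ s, μ < y ∧ r = (φ y - φ μ) / (y - μ)} with hS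
  have hne : S.Nonempty := ⟨_, x₂, h2, hlt2, rfl⟩
  have hub : ∀ r ∈ S, r ≤ (φ μ - φ x₁) / (μ - x₁) := by
    rintro r ⟨y, hy, hμy, rfl⟩
    exact hφ.slope_anti_adjacent h1 hy hlt1 hμy
  have hbdd : BddAbove S := ⟨_, hub⟩
  refine ⟨sSup S, fun y hy => ?_⟩
  rcases lt_trichotomy y μ with h | h | h
  · have hub2 : ∀ r ∈ S, r ≤ (φ μ - φ y) / (μ - y) := by
      rintro r ⟨z, hz, hμz, rfl⟩
      exact hφ.slope_anti_adjacent hy hz h hμz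
    have := csSup_le hne hub2
    have hpos : 0 < μ - y := by linarith
    rw [le_div_iff₀ hpos] at this
    nlinarith
  · simp [h]
  · have hmem : (φ y - φ μ) / (y - μ) ∈ S := ⟨y, hy, h, rfl⟩
    have := le_csSup hbdd hmem
    have hpos : 0 < y - μ := by linarith
    rw [div_le_iff₀ hpos] at this
    linarith

theorem dragomir_jensen_concave {Ω : Type*} [MeasurableSpace Ω]
    (P Q : Measure Ω) [IsProbabilityMeasure P] [IsProbabilityMeasure Q]
    (hPQ : P ≪ Q) (hbdd : essSup (P.rnDeriv Q) Q ≠ ⊤)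
    (X : Ω → ℝ) (hXP : Integrable X P) (hXQ : Integrable X Q)
    (s : Set ℝ) (φ : ℝ → ℝ) (hφ : ConcaveOn ℝ s φ)
    (hrange : ∀ ω, X ω ∈ s)
    (hφP : Integrable (fun ω => φ (X ω)) P)
    (hφQ : Integrable (fun ω => φ (X ω)) Q) :
    φ (∫ ω, X ω ∂P) - ∫ ω, φ (X ω) ∂P ≤
      (essSup (P.rnDeriv Q) Q).toReal *
        (φ (∫ ω, X ω ∂Q) - ∫ ω, φ (X ω) ∂Q) := by
  set μ : ℝ := ∫ ω, X ω ∂Q with hμ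
  set μP : ℝ := ∫ ω, X ω ∂P with hμP
  set M : ℝ := (essSup (P.rnDeriv Q) Q).toReal with hM
  by_cases hdeg : X =ᵐ[Q] fun _ => μ
  · -- degenerate case: X is Q-a.e. (hence P-a.e.) constant
    have hdegP : X =ᵐ[P] fun _ => μ := hPQ.ae_le hdeg
    have h1 : μP = μ := by
      rw [hμP, integral_congr_ae hdegP, integral_const]; simp
    have h2 : (∫ ω, φ (X ω) ∂P) = φ μ := by
      rw [integral_congr_ae (hdegP.mono fun ω hω => by rw [hω]), integral_const]; simp
    have h3 : (∫ ω, φ (X ω) ∂Q) = φ μ := by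
      rw [integral_congr_ae (hdeg.mono fun ω hω => by rw [hω]), integral_const]; simp
    rw [h1, h2, h3]
    simp
  · -- nondegenerate case
    -- there are points of X's range strictly on both sides of μ
    have hexlt : ∃ ω, X ω < μ := by
      by_contra h
      push_neg at h
      have h0 : (∫ ω, (X ω - μ) ∂Q) = 0 := by
        rw [integral_sub hXQ (integrable_const μ), integral_const]; simp [hμ]
      have hint : Integrable (fun ω => X ω - μ) Q := hXQ.sub (integrable_const μ)
      have := (integral_eq_zero_iff_of_nonneg (fun ω => by have := h ω; simp; linarith) hint).mp h0
      exact hdeg (this.mono fun ω hω => by simpa [sub_eq_zero] using hω)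
    have hexgt : ∃ ω, μ < X ω := by
      by_contra h
      push_neg at h
      have h0 : (∫ ω, (μ - X ω) ∂Q) = 0 := by
        rw [integral_sub (integrable_const μ) hXQ, integral_const]; simp [hμ]
      have hint : Integrable (fun ω => μ - X ω) Q := (integrable_const μ).sub hXQ
      have := (integral_eq_zero_iff_of_nonneg (fun ω => by have := h ω; simp; linarith) hint).mp h0
      exact hdeg (this.mono fun ω hω => by simp at hω; linarith [hω])
    obtain ⟨ω₁, hω₁⟩ := hexlt
    obtain ⟨ω₂, hω₂⟩ := hexgt
    obtain ⟨c, hc⟩ := concave_supporting_line hφ (hrange ω₁) (hrange ω₂) hω₁ hω₂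
    -- μP ∈ s
    have hμPles : ∃ ω, μP ≤ X ω := by
      by_contra h
      push_neg at h
      have h0 : (∫ ω, (μP - X ω) ∂P) = 0 := by
        rw [integral_sub (integrable_const μP) hXP, integral_const]; simp [hμP]
      have hint : Integrable (fun ω => μP - X ω) P := (integrable_const μP).sub hXP
      have hae := (integral_eq_zero_iff_of_nonneg
        (fun ω => by have := h ω; simp; linarith) hint).mp h0
      obtain ⟨ω, hω⟩ := hae.exists
      exact absurd (h ω) (by linarith [sub_eq_zero.mp hω])
    have hμPges : ∃ ω, X ω ≤ μP := by
      by_contra h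
      push_neg at h
      have h0 : (∫ ω, (X ω - μP) ∂P) = 0 := by
        rw [integral_sub hXP (integrable_const μP), integral_const]; simp [hμP]
      have hint : Integrable (fun ω => X ω - μP) P := hXP.sub (integrable_const μP)
      have hae := (integral_eq_zero_iff_of_nonneg
        (fun ω => by have := h ω; simp; linarith) hint).mp h0
      obtain ⟨ω, hω⟩ := hae.exists
      exact absurd (h ω) (by linarith [sub_eq_zero.mp hω])
    obtain ⟨ωa, hωa⟩ := hμPles
    obtain ⟨ωb, hωb⟩ := hμPges
    have hμPs : μP ∈ s := hφ.1.ordConnected.out (hrange ωb) (hrange ωa) ⟨hωb, hωa⟩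
    -- define g
    set g : Ω → ℝ := fun ω => φ μ + c * (X ω - μ) - φ (X ω) with hg
    have hg0 : ∀ ω, 0 ≤ g ω := fun ω => by
      have := hc (X ω) (hrange ω); simp [hg]; linarith
    have hgintP : Integrable g P :=
      ((integrable_const (φ μ)).add ((hXP.sub (integrable_const μ)).const_mul c)).sub hφP
    have hgintQ : Integrable g Q :=
      ((integrable_const (φ μ)).add ((hXQ.sub (integrable_const μ)).const_mul c)).sub hφQ
    have hCP : Integrable (fun ω => X ω - μ) P := hXP.sub (integrable_const μ)
    have hBP : Integrable (fun ω => c * (X ω - μ)) P := hCP.const_mul c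
    have hAP : Integrable (fun ω => φ μ + c * (X ω - μ)) P := (integrable_const (φ μ)).add hBP
    have hgiP : (∫ ω, g ω ∂P) = φ μ + c * (μP - μ) - ∫ ω, φ (X ω) ∂P := by
      rw [hg]
      rw [integral_sub hAP hφP, integral_add (integrable_const (φ μ)) hBP,
        integral_const, integral_const_mul, integral_sub hXP (integrable_const μ), integral_const]
      simp [hμP]
    have hCQ : Integrable (fun ω => X ω - μ) Q := hXQ.sub (integrable_const μ)
    have hBQ : Integrable (fun ω => c * (X ω - μ)) Q := hCQ.const_mul c
    have hAQ : Integrable (fun ω => φ μ + c * (X ω - μ)) Q := (integrable_const (φ μ)).add hBQ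
    have hgiQ : (∫ ω, g ω ∂Q) = φ μ - ∫ ω, φ (X ω) ∂Q := by
      rw [hg]
      rw [integral_sub hAQ hφQ, integral_add (integrable_const (φ μ)) hBQ,
        integral_const, integral_const_mul, integral_sub hXQ (integrable_const μ), integral_const]
      simp [hμ]
    -- key inequality ∫ g dP ≤ M * ∫ g dQ
    have hrn : ∀ᵐ ω ∂Q, (P.rnDeriv Q ω).toReal ≤ M := by
      filter_upwards [ae_le_essSup (f := P.rnDeriv Q) (μ := Q)] with ω hω
      exact ENNReal.toReal_mono hbdd hω
    have key : (∫ ω, g ω ∂P) ≤ M * ∫ ω, g ω ∂Q := by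
      rw [← MeasureTheory.integral_rnDeriv_smul hPQ (f := g), ← integral_const_mul]
      refine integral_mono_ae ?_ (hgintQ.const_mul M) ?_
      · exact (MeasureTheory.integrable_rnDeriv_smul_iff hPQ).mpr hgintP
      · filter_upwards [hrn] with ω hω
        simp only [smul_eq_mul]
        exact mul_le_mul_of_nonneg_right hω (hg0 ω)
    have hsupP : φ μP ≤ φ μ + c * (μP - μ) := hc μP hμPs
    calc φ μP - ∫ ω, φ (X ω) ∂P ≤ (φ μ + c * (μP - μ)) - ∫ ω, φ (X ω) ∂P := by linarith
      _ = ∫ ω, g ω ∂P := hgiP.symm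
      _ ≤ M * ∫ ω, g ω ∂Q := key
      _ = M * (φ μ - ∫ ω, φ (X ω) ∂Q) := by rw [hgiQ]
end

section
/- Let P and Q be probability measures on (Ω, 𝒜) with P ≪ Q, X : Ω → ℝ integrable with respect to both P and Q, and φ strictly convex on an interval containing the range of X with φ(X) integrable with respect to both P and Q and dP/dQ essentially bounded. Then ∫ φ(X) dP − φ(∫ X dP) = ‖dP/dQ‖_∞ · ( ∫ φ(X) dQ − φ(∫ X dQ) ) = 0 if and only if X is constant Q-almost everywhere. -/
open MeasureTheory

/-- Strict Jensen: if the Jensen gap vanishes for a strictly convex function,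
the integrand is a.e. constant. -/
lemma jensen_gap_zero_const {Ω : Type*} [MeasurableSpace Ω]
    (Q : Measure Ω) [IsProbabilityMeasure Q]
    (X : Ω → ℝ) (hXQ : Integrable X Q)
    (s : Set ℝ) (φ : ℝ → ℝ) (hφ : StrictConvexOn ℝ s φ)
    (hrange : ∀ ω, X ω ∈ s)
    (hφQ : Integrable (fun ω => φ (X ω)) Q)
    (hgap : ∫ ω, φ (X ω) ∂Q = φ (∫ ω, X ω ∂Q)) :
    ∃ c : ℝ, X =ᵐ[Q] fun _ => c := by
  set m := ∫ ω, X ω ∂Q with hm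
  refine ⟨m, ?_⟩
  by_contra hconst
  -- there exist values of X strictly below and above m
  have hXm : ∫ ω, (X ω - m) ∂Q = 0 := by
    rw [integral_sub hXQ (integrable_const m), integral_const]
    simp [hm]
  have hlow : ∃ ωa, X ωa < m := by
    by_contra h
    push_neg at h
    have h0 : (fun ω => X ω - m) =ᵐ[Q] 0 := by
      rw [← integral_eq_zero_iff_of_nonneg_ae]
      · exact hXm
      · exact Filter.Eventually.of_forall fun ω => by simpa using h ω
      · exact hXQ.sub (integrable_const m)
    exact hconst (h0.mono fun ω hw => by simpa [sub_eq_zero] using hw)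
  have hhigh : ∃ ωb, m < X ωb := by
    by_contra h
    push_neg at h
    have h0 : (fun ω => m - X ω) =ᵐ[Q] 0 := by
      rw [← integral_eq_zero_iff_of_nonneg_ae]
      · rw [integral_sub (integrable_const m) hXQ, integral_const]; simp [hm]
      · exact Filter.Eventually.of_forall fun ω => by simpa using h ω
      · exact (integrable_const m).sub hXQ
    exact hconst (h0.mono fun ω hw => by
      have : m - X ω = 0 := hw
      linarith)
  obtain ⟨ωa, hωa⟩ := hlow
  obtain ⟨ωb, hωb⟩ := hhigh
  set a := X ωa with ha'
  set b := X ωb with hb'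
  have ha : a ∈ s := hrange ωa
  have hb : b ∈ s := hrange ωb
  have hoc : s.OrdConnected := hφ.1.ordConnected
  have hms : m ∈ s := hoc.out ha hb ⟨le_of_lt hωa, le_of_lt hωb⟩
  -- supporting line slope
  set S : Set ℝ := (fun x => (φ x - φ m) / (x - m)) '' (s ∩ Set.Iio m) with hS
  have hSne : S.Nonempty := ⟨_, ⟨a, ⟨ha, hωa⟩, rfl⟩⟩
  have hSbdd : BddAbove S := by
    refine ⟨(φ b - φ m) / (b - m), ?_⟩
    rintro y ⟨x, ⟨hx, hxm⟩, rfl⟩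
    exact le_of_lt (hφ.secant_strict_mono hms hx hb (ne_of_lt hxm)
      (ne_of_gt hωb) (lt_trans hxm hωb))
  set k := sSup S with hk
  -- key strict inequality
  have key : ∀ x ∈ s, x ≠ m → φ m + k * (x - m) < φ x := by
    intro x hx hxm
    rcases lt_or_gt_of_ne hxm with hlt | hgt
    · set y := (x + m) / 2 with hy
      have hy1 : x < y := by rw [hy]; linarith
      have hy2 : y < m := by rw [hy]; linarith
      have hys : y ∈ s := hoc.out hx hms ⟨le_of_lt hy1, le_of_lt hy2⟩
      have h1 : (φ x - φ m) / (x - m) < (φ y - φ m) / (y - m) :=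
        hφ.secant_strict_mono hms hx hys (ne_of_lt hlt) (ne_of_lt hy2) hy1
      have h2 : (φ y - φ m) / (y - m) ≤ k := le_csSup hSbdd ⟨y, ⟨hys, hy2⟩, rfl⟩
      have h3 : (φ x - φ m) / (x - m) < k := lt_of_lt_of_le h1 h2
      have h4 : k * (x - m) < (φ x - φ m) / (x - m) * (x - m) :=
        mul_lt_mul_of_neg_right h3 (by linarith)
      rw [div_mul_cancel₀ _ (by intro h; apply hxm; linarith [sub_eq_zero.mp h] : x - m ≠ 0)] at h4
      linarith
    · set y := (m + x) / 2 with hy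
      have hy1 : m < y := by rw [hy]; linarith
      have hy2 : y < x := by rw [hy]; linarith
      have hys : y ∈ s := hoc.out hms hx ⟨le_of_lt hy1, le_of_lt hy2⟩
      have h2 : k ≤ (φ y - φ m) / (y - m) := by
        apply csSup_le hSne
        rintro z ⟨x', ⟨hx', hx'm⟩, rfl⟩
        exact le_of_lt (hφ.secant_strict_mono hms hx' hys (ne_of_lt hx'm)
          (ne_of_gt hy1) (lt_trans hx'm hy1))
      have h1 : (φ y - φ m) / (y - m) < (φ x - φ m) / (x - m) :=
        hφ.secant_strict_mono hms hys hx (ne_of_gt hy1) (ne_of_gt hgt) hy2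
      have h3 : k < (φ x - φ m) / (x - m) := lt_of_le_of_lt h2 h1
      have h4 : k * (x - m) < (φ x - φ m) / (x - m) * (x - m) :=
        mul_lt_mul_of_pos_right h3 (by linarith)
      rw [div_mul_cancel₀ _ (by intro h; apply hxm; linarith [sub_eq_zero.mp h] : x - m ≠ 0)] at h4
      linarith
  -- the nonnegative function with zero integral
  set f : Ω → ℝ := fun ω => φ (X ω) - (φ m + k * (X ω - m)) with hf
  have hf_int : Integrable f Q := by
    apply hφQ.sub
    exact (integrable_const (φ m)).add ((hXQ.sub (integrable_const m)).const_mul k)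
  have hf_nonneg : 0 ≤ᵐ[Q] f := by
    refine Filter.Eventually.of_forall fun ω => ?_
    rcases eq_or_ne (X ω) m with h | h
    · simp [hf, h]
    · have := key (X ω) (hrange ω) h
      simp only [hf, Pi.zero_apply]
      linarith
  have hi1 : Integrable (fun ω => k * (X ω - m)) Q :=
    (hXQ.sub (integrable_const m)).const_mul k
  have hi2 : Integrable (fun ω => φ m + k * (X ω - m)) Q := (integrable_const _).add hi1
  have hf_zero : ∫ ω, f ω ∂Q = 0 := by
    have h1 : ∫ ω, (φ m + k * (X ω - m)) ∂Q = φ m := by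
      rw [integral_add (integrable_const (φ m)) hi1, integral_const, integral_const_mul, hXm]
      simp
    show ∫ ω, (φ (X ω) - (φ m + k * (X ω - m))) ∂Q = 0
    rw [integral_sub hφQ hi2, h1, hgap]
    simp
  have hf_ae : f =ᵐ[Q] 0 := (integral_eq_zero_iff_of_nonneg_ae hf_nonneg hf_int).mp hf_zero
  apply hconst
  refine hf_ae.mono fun ω hw => ?_
  by_contra h
  have hne : X ω ≠ m := h
  have := key (X ω) (hrange ω) hne
  have h0 : f ω = 0 := hw
  simp only [hf] at h0
  linarith

theorem dragomir_jensen_zero_case {Ω : Type*} [MeasurableSpace Ω]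
    (P Q : Measure Ω) [IsProbabilityMeasure P] [IsProbabilityMeasure Q]
    (hPQ : P ≪ Q) (hbdd : essSup (P.rnDeriv Q) Q ≠ ⊤)
    (X : Ω → ℝ) (hXP : Integrable X P) (hXQ : Integrable X Q)
    (s : Set ℝ) (φ : ℝ → ℝ) (hφ : StrictConvexOn ℝ s φ)
    (hrange : ∀ ω, X ω ∈ s)
    (hφP : Integrable (fun ω => φ (X ω)) P)
    (hφQ : Integrable (fun ω => φ (X ω)) Q) :
    (∫ ω, φ (X ω) ∂P - φ (∫ ω, X ω ∂P) = 0 ∧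
      (essSup (P.rnDeriv Q) Q).toReal *
        (∫ ω, φ (X ω) ∂Q - φ (∫ ω, X ω ∂Q)) = 0) ↔
    ∃ c : ℝ, X =ᵐ[Q] fun _ => c := by
  constructor
  · rintro ⟨-, h2⟩
    -- essSup ≥ 1, so its toReal is nonzero
    have h1le : (1 : ENNReal) ≤ essSup (P.rnDeriv Q) Q := by
      have hint : ∫⁻ ω, P.rnDeriv Q ω ∂Q = 1 := by
        rw [Measure.lintegral_rnDeriv hPQ]; simp
      calc (1 : ENNReal) = ∫⁻ ω, P.rnDeriv Q ω ∂Q := hint.symm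
        _ ≤ ∫⁻ _, essSup (P.rnDeriv Q) Q ∂Q := lintegral_mono_ae (ae_le_essSup (Filter.isBoundedUnder_of ⟨⊤, fun _ => le_top⟩))
        _ = essSup (P.rnDeriv Q) Q := by simp
    have hne : (essSup (P.rnDeriv Q) Q).toReal ≠ 0 :=
      ENNReal.toReal_ne_zero.mpr ⟨by
        intro h; rw [h] at h1le; exact (by simp at h1le), hbdd⟩
    have hgap : ∫ ω, φ (X ω) ∂Q - φ (∫ ω, X ω ∂Q) = 0 := by
      rcases mul_eq_zero.mp h2 with h | h
      · exact absurd h hne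
      · exact h
    exact jensen_gap_zero_const Q X hXQ s φ hφ hrange hφQ (by linarith)
  · rintro ⟨c, hc⟩
    have hcP : X =ᵐ[P] fun _ => c := hc.filter_mono (hPQ.ae_le)
    have hφcQ : (fun ω => φ (X ω)) =ᵐ[Q] fun _ => φ c := hc.mono fun ω hω => congrArg φ hω
    have hφcP : (fun ω => φ (X ω)) =ᵐ[P] fun _ => φ c := hφcQ.filter_mono (hPQ.ae_le)
    have hXQ' : ∫ ω, X ω ∂Q = c := by rw [integral_congr_ae hc]; simp
    have hXP' : ∫ ω, X ω ∂P = c := by rw [integral_congr_ae hcP]; simp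
    have hφQ' : ∫ ω, φ (X ω) ∂Q = φ c := by rw [integral_congr_ae hφcQ]; simp
    have hφP' : ∫ ω, φ (X ω) ∂P = φ c := by rw [integral_congr_ae hφcP]; simp
    rw [hXQ', hXP', hφQ', hφP']
    simp
end

section
/- There exist a probability space (Ω, 𝒜), probability measures P and Q on it with P not absolutely continuous with respect to Q, and an integrable function X : Ω → ℝ such that P ≪ Q holds when both measures are restricted to the set {X ≠ 0}, the restricted Radon–Nikodym derivative is bounded there, yet with φ(t) = t², one has ∫ X² dP − (∫ X dP)² > ‖dP/dQ‖_{∞, {X≠0}} · ( ∫ X² dQ − (∫ X dQ)² ). Concretely: Ω = [0,1] with Lebesgue measurable sets, dP = dx (Lebesgue measure), X = χ_{[1/2,1]}, dQ = 2·χ_{[1/2,1]} dx; then the right-hand side is 0 while the left-hand side is 1/4. -/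
open MeasureTheory

theorem counterexample_ac_on_support_insufficient :
    let P : Measure ℝ := volume.restrict (Set.Icc 0 1)
    let Q : Measure ℝ := volume.withDensity ((Set.Icc (1/2 : ℝ) 1).indicator fun _ => 2)
    let X : ℝ → ℝ := (Set.Icc (1/2 : ℝ) 1).indicator fun _ => 1
    IsProbabilityMeasure P ∧ IsProbabilityMeasure Q ∧
    ¬ P ≪ Q ∧ Integrable X P ∧
    P.restrict {x | X x ≠ 0} ≪ Q.restrict {x | X x ≠ 0} ∧
    essSup ((P.restrict {x | X x ≠ 0}).rnDeriv (Q.restrict {x | X x ≠ 0}))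
      (Q.restrict {x | X x ≠ 0}) = 1/2 ∧
    ∫ x, (X x)^2 ∂P - (∫ x, X x ∂P)^2 >
      (1/2 : ℝ) * (∫ x, (X x)^2 ∂Q - (∫ x, X x ∂Q)^2) := by
  intro P Q X
  have hS : MeasurableSet (Set.Icc (1/2 : ℝ) 1) := measurableSet_Icc
  have hQ : Q = (2 : ENNReal) • volume.restrict (Set.Icc (1/2 : ℝ) 1) := by
    show volume.withDensity _ = _
    rw [withDensity_indicator hS, withDensity_const]
  have hset : {x | X x ≠ 0} = Set.Icc (1/2 : ℝ) 1 := by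
    ext x
    by_cases h : x ∈ Set.Icc (1/2 : ℝ) 1 <;>
      simp [X, Set.indicator_of_mem, Set.indicator_of_notMem, h]
  have hsub : Set.Icc (1/2 : ℝ) 1 ∩ Set.Icc (0:ℝ) 1 = Set.Icc (1/2 : ℝ) 1 :=
    Set.inter_eq_left.mpr (fun x hx => ⟨le_trans (by norm_num) hx.1, hx.2⟩)
  have hPres : P.restrict {x | X x ≠ 0} = volume.restrict (Set.Icc (1/2 : ℝ) 1) := by
    show (volume.restrict (Set.Icc 0 1)).restrict _ = _
    rw [hset, Measure.restrict_restrict hS, hsub]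
  have hQres : Q.restrict {x | X x ≠ 0} =
      (2 : ENNReal) • volume.restrict (Set.Icc (1/2 : ℝ) 1) := by
    rw [hset, hQ, Measure.restrict_smul, Measure.restrict_restrict hS, Set.inter_self]
  have hvol : volume (Set.Icc (1/2 : ℝ) 1) = 1/2 := by
    rw [Real.volume_Icc, show (1:ℝ) - 1/2 = 2⁻¹ by norm_num,
      ENNReal.ofReal_inv_of_pos two_pos]
    norm_num
  have hProb : IsProbabilityMeasure P := by
    constructor
    show volume.restrict (Set.Icc (0:ℝ) 1) Set.univ = 1
    rw [Measure.restrict_apply_univ, Real.volume_Icc]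
    norm_num
  have hQProb : IsProbabilityMeasure Q := by
    constructor
    rw [hQ, Measure.smul_apply, Measure.restrict_apply_univ, hvol]
    simp [ENNReal.mul_inv_cancel]
  have hX2 : (fun x => (X x)^2) = X := by
    funext x
    show ((Set.Icc (1/2 : ℝ) 1).indicator (fun _ => (1:ℝ)) x)^2 =
      (Set.Icc (1/2 : ℝ) 1).indicator (fun _ => (1:ℝ)) x
    by_cases h : x ∈ Set.Icc (1/2 : ℝ) 1
    · rw [Set.indicator_of_mem h]; norm_num
    · rw [Set.indicator_of_notMem h]; norm_num
  have hintP : ∫ x, X x ∂P = 1/2 := by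
    show ∫ x, (Set.Icc (1/2 : ℝ) 1).indicator (fun _ => (1:ℝ)) x ∂P = 1/2
    rw [integral_indicator hS, setIntegral_const]
    show ((volume.restrict (Set.Icc (0:ℝ) 1)) (Set.Icc (1/2:ℝ) 1)).toReal • (1:ℝ) = 1/2
    rw [Measure.restrict_apply hS, hsub, hvol]
    norm_num
  have hintvol : ∫ x, X x ∂(volume.restrict (Set.Icc (1/2 : ℝ) 1)) = 1/2 := by
    show ∫ x, (Set.Icc (1/2 : ℝ) 1).indicator (fun _ => (1:ℝ)) x ∂_ = 1/2
    rw [integral_indicator hS, setIntegral_const, Measure.real, Measure.restrict_apply hS,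
      Set.inter_self, hvol]
    norm_num
  have hintQ : ∫ x, X x ∂Q = 1 := by
    rw [hQ, integral_smul_measure, hintvol]
    norm_num
  refine ⟨hProb, hQProb, ?_, ?_, ?_, ?_, ?_⟩
  · intro h
    have h0 : Q (Set.Ico (0:ℝ) (1/2)) = 0 := by
      rw [hQ, Measure.smul_apply, Measure.restrict_apply measurableSet_Ico]
      have : Set.Ico (0:ℝ) (1/2) ∩ Set.Icc (1/2:ℝ) 1 = ∅ := by
        apply Set.eq_empty_iff_forall_notMem.mpr
        rintro x ⟨⟨_, h1⟩, h2, _⟩; linarith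
      rw [this]
      simp
    have := h h0
    rw [show P = volume.restrict (Set.Icc (0:ℝ) 1) from rfl,
      Measure.restrict_apply measurableSet_Ico] at this
    have heq : Set.Ico (0:ℝ) (1/2) ∩ Set.Icc (0:ℝ) 1 = Set.Ico (0:ℝ) (1/2) :=
      Set.inter_eq_left.mpr (fun x hx => ⟨hx.1, le_trans (le_of_lt hx.2) (by norm_num)⟩)
    rw [heq, Real.volume_Ico] at this
    norm_num at this
  · exact (integrable_const (1:ℝ)).indicator hS
  · rw [hPres, hQres]
    intro s hs
    rw [Measure.smul_apply] at hs
    simpa using hs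
  · have hwd : P.restrict {x | X x ≠ 0} =
        (Q.restrict {x | X x ≠ 0}).withDensity (fun _ => 2⁻¹) := by
      rw [hPres, hQres, withDensity_const, smul_smul,
        ENNReal.inv_mul_cancel (by norm_num) (by norm_num), one_smul]
    rw [hwd]
    have hae := Measure.rnDeriv_withDensity (Q.restrict {x | X x ≠ 0})
      (measurable_const (a := (2⁻¹ : ENNReal)))
    rw [essSup_congr_ae hae, essSup_const]
    · norm_num
    · rw [hQres]
      intro h
      have : ((2 : ENNReal) • volume.restrict (Set.Icc (1/2 : ℝ) 1)) Set.univ = 0 := by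
        rw [h]; rfl
      rw [Measure.smul_apply, Measure.restrict_apply_univ, hvol] at this
      norm_num at this
  · rw [hX2, hintP, hintQ]
    norm_num
end

section
/- Fix p ∈ [1, ∞). Let Q be Lebesgue measure on (0,1], X(t) = t^{−1/2 + 1/(4p)}, and dP(t) = C·t^{−1/(2p)} dt where C = 1 − 1/(2p) normalizes P to a probability. Then X ∈ L¹(P) ∩ L¹(Q), ∫ X² dQ < ∞, ‖dP/dQ‖_{L^p(Q)} < ∞, but ∫ X² dP = ∞. Consequently, ∫ X² dP − (∫ X dP)² = ∞ > c · ‖dP/dQ‖_{L^p(Q)} · ( ∫ X² dQ − (∫ X dQ)² ) for every constant c > 0. -/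
open MeasureTheory Set Real
open scoped ENNReal

open intervalIntegral in
lemma aux_integrableOn_Ioc_rpow {r : ℝ} (h : -1 < r) :
    IntegrableOn (fun x : ℝ => x ^ r) (Set.Ioc 0 1) := by
  have := intervalIntegrable_rpow' (a := 0) (b := 1) h
  rwa [intervalIntegrable_iff_integrableOn_Ioc_of_le zero_le_one] at this

open intervalIntegral in
lemma aux_setIntegral_Ioc_rpow {r : ℝ} (h : -1 < r) :
    ∫ x in Set.Ioc (0:ℝ) 1, x ^ r = 1 / (r + 1) := by
  rw [← integral_of_le zero_le_one, integral_rpow (Or.inl h),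
    Real.one_rpow, Real.zero_rpow (by linarith : r + 1 ≠ 0)]
  ring

theorem lp_norm_insufficient (p : ℝ) (hp : 1 ≤ p) :
    let Q : Measure ℝ := volume.restrict (Set.Ioc 0 1)
    let X : ℝ → ℝ := fun t => t ^ (-(1/2 : ℝ) + 1/(4*p))
    let P : Measure ℝ := Q.withDensity
      (fun t => ENNReal.ofReal ((1 - 1/(2*p)) * t ^ (-(1/(2*p) : ℝ))))
    IsProbabilityMeasure P ∧
    Integrable X P ∧ Integrable X Q ∧
    Integrable (fun t => (X t)^2) Q ∧
    (∫⁻ t, (P.rnDeriv Q t) ^ p ∂Q) < ⊤ ∧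
    (∫⁻ t, ENNReal.ofReal ((X t)^2) ∂P) = ⊤ ∧
    ∀ c : ℝ, 0 < c →
      ENNReal.ofReal (c * (∫ t, (X t)^2 ∂Q - (∫ t, X t ∂Q)^2)) <
        ∫⁻ t, ENNReal.ofReal ((X t)^2) ∂P := by
  intro Q X P
  have hp0 : (0:ℝ) < p := lt_of_lt_of_le zero_lt_one hp
  set a : ℝ := -(1/2 : ℝ) + 1/(4*p) with ha_def
  set b : ℝ := -(1/(2*p) : ℝ) with hb_def
  set c0 : ℝ := 1 - 1/(2*p) with hc0_def
  have h2p : (2:ℝ) ≤ 2*p := by linarith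
  have h4p0 : (0:ℝ) < 4*p := by linarith
  have h2p0 : (0:ℝ) < 2*p := by linarith
  have hq2 : 1/(2*p) ≤ 1/2 := by
    apply one_div_le_one_div_of_le (by norm_num) h2p
  have hq4 : 1/(4*p) ≤ 1/4 := by
    apply one_div_le_one_div_of_le (by norm_num) (by linarith)
  have hq0 : 0 < 1/(2*p) := by positivity
  have hq40 : 0 < 1/(4*p) := by positivity
  have hc0 : 0 < c0 := by rw [hc0_def]; linarith
  have ha : -1 < a := by rw [ha_def]; linarith
  have hkey : 1/(4*p) + 1/(4*p) = 1/(2*p) := by field_simp; ring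
  have ha2 : -1 < a + a := by rw [ha_def]; linarith
  have hb : -1 < b := by rw [hb_def]; linarith
  have hab : -1 < a + b := by rw [ha_def, hb_def]; linarith
  have hbp : b * p = -(1/2) := by rw [hb_def]; field_simp
  have h2ab : a + a + b = -1 := by rw [ha_def, hb_def]; field_simp; ring
  have hb1 : b + 1 = c0 := by rw [hb_def, hc0_def]; ring
  -- the density function
  set f : ℝ → ℝ≥0∞ := fun t => ENNReal.ofReal (c0 * t ^ b) with hf_def
  have hfm : Measurable f := by
    apply Measurable.ennreal_ofReal
    fun_prop
  have hae : ∀ᵐ t ∂Q, t ∈ Set.Ioc (0:ℝ) 1 := ae_restrict_mem measurableSet_Ioc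
  have hP_eq : P = Q.withDensity f := rfl
  -- probability measure
  have hIntg : Integrable (fun t => c0 * t ^ b) Q := (aux_integrableOn_Ioc_rpow hb).const_mul c0
  have hnng : 0 ≤ᵐ[Q] fun t => c0 * t ^ b := by
    filter_upwards [hae] with t ht
    exact mul_nonneg hc0.le (rpow_nonneg ht.1.le _)
  have hprob : IsProbabilityMeasure P := by
    constructor
    rw [hP_eq, withDensity_apply f MeasurableSet.univ, setLIntegral_univ,
      ← ofReal_integral_eq_lintegral_ofReal hIntg hnng]
    have : ∫ t, c0 * t ^ b ∂Q = 1 := by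
      rw [integral_const_mul, aux_setIntegral_Ioc_rpow hb, hb1]
      field_simp
    rw [this, ENNReal.ofReal_one]
  -- measurability of X-related functions
  have hXmeas : Measurable X := by
    show Measurable fun t : ℝ => t ^ (-(1/2:ℝ) + 1/(4*p))
    fun_prop
  have hXm : Measurable fun t => ENNReal.ofReal ((X t)^2) :=
    ((hXmeas.pow_const 2).ennreal_ofReal)
  -- the key divergence
  have htop : (∫⁻ t, ENNReal.ofReal ((X t)^2) ∂P) = ⊤ := by
    rw [hP_eq, lintegral_withDensity_eq_lintegral_mul Q hfm hXm]
    have hcongr2 : (fun t => (f * fun t => ENNReal.ofReal ((X t)^2)) t) =ᵐ[Q]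
        fun t => ENNReal.ofReal (c0 * t⁻¹) := by
      filter_upwards [hae] with t ht
      simp only [Pi.mul_apply, hf_def]
      rw [← ENNReal.ofReal_mul (mul_nonneg hc0.le (rpow_nonneg ht.1.le _))]
      congr 1
      have hXt : (X t)^2 = t ^ a * t ^ a := by
        simp only [X]; rw [← ha_def, sq]
      rw [hXt]
      have h1 : t ^ b * (t ^ a * t ^ a) = t ^ (b + (a + a)) := by
        rw [← Real.rpow_add ht.1, ← Real.rpow_add ht.1]
      have h2 : b + (a + a) = -1 := by linarith
      calc c0 * t ^ b * (t ^ a * t ^ a) = c0 * (t ^ b * (t ^ a * t ^ a)) := by ring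
        _ = c0 * t ^ (-1:ℝ) := by rw [h1, h2]
        _ = c0 * t⁻¹ := by rw [Real.rpow_neg_one]
    rw [lintegral_congr_ae hcongr2]
    by_contra hne
    have hnn3 : 0 ≤ᵐ[Q] fun t : ℝ => c0 * t⁻¹ := by
      filter_upwards [hae] with t ht
      exact mul_nonneg hc0.le (inv_nonneg.mpr ht.1.le)
    have hInt3 : Integrable (fun t : ℝ => c0 * t⁻¹) Q :=
      ⟨(measurable_inv.const_mul c0).aestronglyMeasurable,
        (hasFiniteIntegral_iff_ofReal hnn3).mpr (lt_top_iff_ne_top.mpr hne)⟩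
    have hInt5 : Integrable (fun t : ℝ => t⁻¹) Q := by
      refine (hInt3.const_mul c0⁻¹).congr ?_
      filter_upwards with t
      field_simp
    have hInt4 : IntegrableOn (fun t : ℝ => t⁻¹) (Set.Ioo 0 1) :=
      IntegrableOn.mono_set hInt5 Set.Ioo_subset_Ioc_self
    have h6 : IntegrableOn (fun x : ℝ => x ^ (-1:ℝ)) (Set.Ioo 0 1) := by
      refine hInt4.congr_fun ?_ measurableSet_Ioo
      intro x _
      exact (Real.rpow_neg_one x).symm
    rw [intervalIntegral.integrableOn_Ioo_rpow_iff one_pos] at h6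
    exact absurd h6 (lt_irrefl _)
  refine ⟨hprob, ?_, ?_, ?_, ?_, htop, ?_⟩
  · -- Integrable X P
    rw [hP_eq, integrable_withDensity_iff hfm (Filter.Eventually.of_forall fun t => ENNReal.ofReal_lt_top)]
    have hbase : Integrable (fun t => c0 * t ^ (a + b)) Q :=
      (aux_integrableOn_Ioc_rpow hab).const_mul c0
    refine hbase.congr ?_
    filter_upwards [hae] with t ht
    rw [hf_def]
    simp only [X]
    rw [ENNReal.toReal_ofReal (mul_nonneg hc0.le (rpow_nonneg ht.1.le _)),
      ← ha_def, Real.rpow_add ht.1]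
    ring
  · exact aux_integrableOn_Ioc_rpow ha
  · -- Integrable X² Q
    have hbase : Integrable (fun t => t ^ (a + a)) Q := aux_integrableOn_Ioc_rpow ha2
    refine hbase.congr ?_
    filter_upwards [hae] with t ht
    simp only [X]
    rw [← ha_def, Real.rpow_add ht.1, sq]
  · -- rnDeriv lintegral finite
    have hrn : P.rnDeriv Q =ᵐ[Q] f := Measure.rnDeriv_withDensity Q hfm
    have hcongr : (fun t => (P.rnDeriv Q t) ^ p) =ᵐ[Q]
        fun t => ENNReal.ofReal (c0 ^ p * t ^ (-(1/2):ℝ)) := by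
      filter_upwards [hrn, hae] with t hrt ht
      rw [hrt, hf_def]
      rw [ENNReal.ofReal_rpow_of_nonneg (mul_nonneg hc0.le (rpow_nonneg ht.1.le _)) (by linarith),
        Real.mul_rpow hc0.le (rpow_nonneg ht.1.le _), ← Real.rpow_mul ht.1.le, hbp]
    rw [lintegral_congr_ae hcongr]
    have hInt2 : Integrable (fun t : ℝ => c0 ^ p * t ^ (-(1/2):ℝ)) Q :=
      (aux_integrableOn_Ioc_rpow (by norm_num)).const_mul _
    have hnn2 : 0 ≤ᵐ[Q] fun t : ℝ => c0 ^ p * t ^ (-(1/2):ℝ) := by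
      filter_upwards [hae] with t ht
      exact mul_nonneg (rpow_nonneg hc0.le _) (rpow_nonneg ht.1.le _)
    exact (hasFiniteIntegral_iff_ofReal hnn2).mp hInt2.hasFiniteIntegral
  · intro c hc
    rw [htop]
    exact ENNReal.ofReal_lt_top
end

section
/- Let 0 < σ₁ ≤ σ₂ and let g : ℝ → ℝ be a bounded measurable function with g square-integrable against both N(0,σ₁²) and N(0,σ₂²). Write Var_i(g) := ∫ g² dN(0,σ_i²) − (∫ g dN(0,σ_i²))² for i = 1, 2. Then Var₁(g) ≤ (σ₂/σ₁) · Var₂(g). -/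
open MeasureTheory ProbabilityTheory Real
open scoped NNReal ENNReal

lemma gaussianPDFReal_le_aux (σ₁ σ₂ : ℝ≥0) (h1 : 0 < σ₁) (h12 : σ₁ ≤ σ₂) (x : ℝ) :
    gaussianPDFReal 0 (σ₁^2) x ≤ (σ₂/σ₁ : ℝ) * gaussianPDFReal 0 (σ₂^2) x := by
  have h1' : (0:ℝ) < σ₁ := h1
  have h2' : (0:ℝ) < σ₂ := lt_of_lt_of_le h1' h12
  have h12' : (σ₁:ℝ) ≤ σ₂ := h12
  have hπ : (0:ℝ) < 2 * π := by positivity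
  simp only [gaussianPDFReal, sub_zero]
  have hs : ∀ σ : ℝ≥0, 0 < (σ:ℝ) → Real.sqrt (2 * π * ((σ^2 : ℝ≥0) : ℝ)) = σ * Real.sqrt (2 * π) := by
    intro σ hσ
    push_cast
    rw [mul_comm (2*π), Real.sqrt_mul (by positivity), Real.sqrt_sq hσ.le]
  rw [hs σ₁ h1', hs σ₂ h2']
  have hsq : (0:ℝ) < Real.sqrt (2*π) := Real.sqrt_pos.mpr hπ
  have hexp : rexp (-x^2 / (2 * ((σ₁^2 : ℝ≥0) : ℝ))) ≤ rexp (-x^2 / (2 * ((σ₂^2 : ℝ≥0) : ℝ))) := by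
    rw [Real.exp_le_exp]
    push_cast
    rw [neg_div, neg_div, neg_le_neg_iff]
    gcongr
  have hconst : ((σ₁:ℝ) * Real.sqrt (2*π))⁻¹ = (σ₂/σ₁) * ((σ₂:ℝ) * Real.sqrt (2*π))⁻¹ := by
    field_simp
  calc ((σ₁:ℝ) * Real.sqrt (2*π))⁻¹ * rexp (-x^2 / (2 * ((σ₁^2 : ℝ≥0) : ℝ)))
      ≤ ((σ₁:ℝ) * Real.sqrt (2*π))⁻¹ * rexp (-x^2 / (2 * ((σ₂^2 : ℝ≥0) : ℝ))) := by
        gcongr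
    _ = (σ₂/σ₁) * (((σ₂:ℝ) * Real.sqrt (2*π))⁻¹ * rexp (-x^2 / (2 * ((σ₂^2 : ℝ≥0) : ℝ)))) := by
        rw [hconst]; ring

theorem gaussian_variance_comparison (σ₁ σ₂ : ℝ≥0) (h1 : 0 < σ₁) (h12 : σ₁ ≤ σ₂)
    (g : ℝ → ℝ) (hg : Measurable g) (hgbdd : ∃ C : ℝ, ∀ x, |g x| ≤ C)
    (hg1 : MemLp g 2 (gaussianReal 0 (σ₁ ^ 2)))
    (hg2 : MemLp g 2 (gaussianReal 0 (σ₂ ^ 2))) :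
    ∫ x, (g x)^2 ∂(gaussianReal 0 (σ₁ ^ 2)) -
        (∫ x, g x ∂(gaussianReal 0 (σ₁ ^ 2)))^2 ≤
      (σ₂ / σ₁ : ℝ) * (∫ x, (g x)^2 ∂(gaussianReal 0 (σ₂ ^ 2)) -
        (∫ x, g x ∂(gaussianReal 0 (σ₂ ^ 2)))^2) := by
  have h1' : (0:ℝ) < σ₁ := h1
  have h2 : 0 < σ₂ := lt_of_lt_of_le h1 h12
  have hv1 : (σ₁^2 : ℝ≥0) ≠ 0 := by positivity
  have hv2 : (σ₂^2 : ℝ≥0) ≠ 0 := by positivity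
  set μ₁ := gaussianReal 0 (σ₁ ^ 2) with hμ₁
  set μ₂ := gaussianReal 0 (σ₂ ^ 2) with hμ₂
  set m₂ := ∫ x, g x ∂μ₂ with hm₂
  set m₁ := ∫ x, g x ∂μ₁ with hm₁
  set f := fun x ↦ (g x - m₂)^2 with hf
  have hfnn : ∀ x, 0 ≤ f x := fun x ↦ sq_nonneg _
  have hfm : Measurable f := ((hg.sub measurable_const).pow measurable_const)
  -- expansion of ∫ f over each measure
  have expand : ∀ (μ : Measure ℝ) (_ : IsProbabilityMeasure μ), MemLp g 2 μ →
      ∫ x, f x ∂μ = ∫ x, (g x)^2 ∂μ - 2 * m₂ * (∫ x, g x ∂μ) + m₂^2 := by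
    intro μ hP hgμ
    have hsq : Integrable (fun x ↦ (g x)^2) μ := hgμ.integrable_sq
    have hgi : Integrable g μ := hgμ.integrable one_le_two
    have hmix : Integrable (fun x ↦ (g x)^2 - 2 * m₂ * g x) μ := hsq.sub (hgi.const_mul _)
    calc ∫ x, f x ∂μ = ∫ x, ((g x)^2 - 2*m₂*g x) + m₂^2 ∂μ := by
          refine integral_congr_ae (ae_of_all _ fun x ↦ ?_); simp only [hf]; ring
      _ = (∫ x, ((g x)^2 - 2*m₂*g x) ∂μ) + ∫ _, m₂^2 ∂μ := integral_add hmix (integrable_const _)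
      _ = (∫ x, (g x)^2 ∂μ) - (∫ x, 2*m₂*g x ∂μ) + m₂^2 := by
          rw [integral_sub hsq (hgi.const_mul _), integral_const]; simp [measure_univ]
      _ = ∫ x, (g x)^2 ∂μ - 2 * m₂ * (∫ x, g x ∂μ) + m₂^2 := by rw [integral_const_mul]
  have E1 := expand μ₁ inferInstance hg1
  have E2 := expand μ₂ inferInstance hg2
  -- key density comparison
  have hfi2 : Integrable f μ₂ := (hg2.sub (memLp_const m₂)).integrable_sq
  have key : ∫ x, f x ∂μ₁ ≤ (σ₂/σ₁ : ℝ) * ∫ x, f x ∂μ₂ := by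
    have hFm : Measurable fun x ↦ ENNReal.ofReal (f x) := hfm.ennreal_ofReal
    have hlin : ∫⁻ x, ENNReal.ofReal (f x) ∂μ₁
        ≤ ENNReal.ofReal (σ₂/σ₁ : ℝ) * ∫⁻ x, ENNReal.ofReal (f x) ∂μ₂ := by
      rw [hμ₁, hμ₂, gaussianReal_of_var_ne_zero _ hv1, gaussianReal_of_var_ne_zero _ hv2,
        lintegral_withDensity_eq_lintegral_mul _ (measurable_gaussianPDF _ _) hFm,
        lintegral_withDensity_eq_lintegral_mul _ (measurable_gaussianPDF _ _) hFm]
      simp only [Pi.mul_apply]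
      rw [← lintegral_const_mul _ (f := fun a => gaussianPDF 0 (σ₂^2) a * ENNReal.ofReal (f a))
        ((measurable_gaussianPDF 0 (σ₂^2)).mul hFm)]
      refine lintegral_mono fun x ↦ ?_
      rw [← mul_assoc]
      refine mul_le_mul_left ?_ _
      rw [gaussianPDF, gaussianPDF, ← ENNReal.ofReal_mul (by positivity)]
      exact ENNReal.ofReal_le_ofReal (gaussianPDFReal_le_aux σ₁ σ₂ h1 h12 x)
    have h2fin : ∫⁻ x, ENNReal.ofReal (f x) ∂μ₂ ≠ ⊤ := by
      rw [← ofReal_integral_eq_lintegral_ofReal hfi2 (ae_of_all _ hfnn)]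
      exact ENNReal.ofReal_ne_top
    have e1 : ∫ x, f x ∂μ₁ = (∫⁻ x, ENNReal.ofReal (f x) ∂μ₁).toReal := by
      rw [integral_eq_lintegral_of_nonneg_ae (ae_of_all _ hfnn) hfm.aestronglyMeasurable]
    have e2 : ∫ x, f x ∂μ₂ = (∫⁻ x, ENNReal.ofReal (f x) ∂μ₂).toReal := by
      rw [integral_eq_lintegral_of_nonneg_ae (ae_of_all _ hfnn) hfm.aestronglyMeasurable]
    rw [e1, e2]
    calc (∫⁻ x, ENNReal.ofReal (f x) ∂μ₁).toReal
        ≤ (ENNReal.ofReal (σ₂/σ₁ : ℝ) * ∫⁻ x, ENNReal.ofReal (f x) ∂μ₂).toReal := by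
          refine ENNReal.toReal_mono ?_ hlin
          exact ENNReal.mul_ne_top ENNReal.ofReal_ne_top h2fin
      _ = (σ₂/σ₁ : ℝ) * (∫⁻ x, ENNReal.ofReal (f x) ∂μ₂).toReal := by
          rw [ENNReal.toReal_mul, ENNReal.toReal_ofReal (by positivity)]
  have hratio : (1:ℝ) ≤ σ₂/σ₁ := (one_le_div h1').mpr h12
  nlinarith [sq_nonneg (m₁ - m₂), key, E1, E2, sq_nonneg (m₁ - m₂),
    mul_le_mul_of_nonneg_left key (le_of_lt (lt_of_lt_of_le one_pos hratio))]
end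

section
/- Let P and Q be probability measures on (Ω, 𝒜) with P ≪ Q, X : Ω → ℝ integrable with respect to both P and Q, and φ strictly convex on an interval containing the range of X, with ∫ φ(X) dQ < ∞ and ‖dP/dQ‖_∞ < ∞. Let A := { ω : (dP/dQ)(ω) = ‖dP/dQ‖_∞ }. If there is a constant c with X = c Q-a.e. on Ω \ A, Q(A) > 0, P(A) > 0, and c = ∫ X dQ = (1/Q(A)) ∫_A X dQ = ∫ X dP = (1/P(A)) ∫_A X dP, then equality holds in the Dragomir–Jensen inequality: ∫ φ(X) dP − φ(∫ X dP) = ‖dP/dQ‖_∞ · ( ∫ φ(X) dQ − φ(∫ X dQ) ). -/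
open MeasureTheory

theorem dragomir_jensen_equality_sufficiency {Ω : Type*} [MeasurableSpace Ω]
    (P Q : Measure Ω) [IsProbabilityMeasure P] [IsProbabilityMeasure Q]
    (hPQ : P ≪ Q) (hbdd : essSup (P.rnDeriv Q) Q ≠ ⊤)
    (X : Ω → ℝ) (hXP : Integrable X P) (hXQ : Integrable X Q)
    (s : Set ℝ) (φ : ℝ → ℝ) (hφ : StrictConvexOn ℝ s φ)
    (hrange : ∀ ω, X ω ∈ s)
    (hφQ : Integrable (fun ω => φ (X ω)) Q)
    (A : Set Ω) (hA : A = {ω | P.rnDeriv Q ω = essSup (P.rnDeriv Q) Q})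
    (c : ℝ)
    (hconst : ∀ᵐ ω ∂(Q.restrict Aᶜ), X ω = c)
    (hQA : 0 < Q A) (hPA : 0 < P A)
    (hcQ : c = ∫ ω, X ω ∂Q)
    (hcQA : c = ((Q A).toReal)⁻¹ * ∫ ω in A, X ω ∂Q)
    (hcP : c = ∫ ω, X ω ∂P)
    (hcPA : c = ((P A).toReal)⁻¹ * ∫ ω in A, X ω ∂P) :
    ∫ ω, φ (X ω) ∂P - φ (∫ ω, X ω ∂P) =
      (essSup (P.rnDeriv Q) Q).toReal *
        (∫ ω, φ (X ω) ∂Q - φ (∫ ω, X ω ∂Q)) := by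
  set M : ENNReal := essSup (P.rnDeriv Q) Q with hM
  have hAmeas : MeasurableSet A := by
    rw [hA]
    exact (Measure.measurable_rnDeriv P Q) (measurableSet_singleton M)
  -- P ≤ M • Q
  have hle : P ≤ M • Q := by
    rw [Measure.le_iff]
    intro E hE
    rw [← Measure.setLIntegral_rnDeriv hPQ E]
    calc ∫⁻ x in E, P.rnDeriv Q x ∂Q ≤ ∫⁻ _ in E, M ∂Q := by
          refine setLIntegral_mono_ae aemeasurable_const ?_
          filter_upwards [ae_le_essSup (f := P.rnDeriv Q) (μ := Q)] with x hx _ using hx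
      _ = M * Q E := setLIntegral_const E M
      _ = (M • Q) E := by simp [Measure.smul_apply, smul_eq_mul]
  have hφP : Integrable (fun ω => φ (X ω)) P :=
    (hφQ.smul_measure hbdd).mono_measure hle
  -- P restricted to A equals M • Q restricted to A
  have hrestr : P.restrict A = M • (Q.restrict A) := by
    ext E hE
    rw [Measure.restrict_apply hE, Measure.smul_apply, Measure.restrict_apply hE,
      ← Measure.setLIntegral_rnDeriv hPQ (E ∩ A)]
    have : ∫⁻ x in E ∩ A, P.rnDeriv Q x ∂Q = ∫⁻ _ in E ∩ A, M ∂Q := by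
      refine setLIntegral_congr_fun (hE.inter hAmeas) ?_
      intro x hx
      have : x ∈ A := hx.2
      rw [hA] at this
      exact this
    rw [this, setLIntegral_const]
    rfl
  -- P A = M * Q A (as ennreal)
  have hPAeq : P A = M * Q A := by
    have := congrArg (fun μ : Measure Ω => μ Set.univ) hrestr
    simpa [Measure.restrict_apply_univ] using this
  -- integrals over A
  have hintA : ∫ ω in A, φ (X ω) ∂P = M.toReal * ∫ ω in A, φ (X ω) ∂Q := by
    rw [hrestr, integral_smul_measure]
    rfl
  -- X = c a.e. on Aᶜ w.r.t. P too
  have hPQc : P.restrict Aᶜ ≪ Q.restrict Aᶜ := hPQ.restrict Aᶜ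
  have hconstP : ∀ᵐ ω ∂(P.restrict Aᶜ), X ω = c := hPQc hconst
  have hintAcP : ∫ ω in Aᶜ, φ (X ω) ∂P = (P Aᶜ).toReal * φ c := by
    rw [show ∫ ω in Aᶜ, φ (X ω) ∂P = ∫ _ω in Aᶜ, φ c ∂P from
      integral_congr_ae (by filter_upwards [hconstP] with ω hω; rw [hω])]
    rw [setIntegral_const]; rfl
  have hintAcQ : ∫ ω in Aᶜ, φ (X ω) ∂Q = (Q Aᶜ).toReal * φ c := by
    rw [show ∫ ω in Aᶜ, φ (X ω) ∂Q = ∫ _ω in Aᶜ, φ c ∂Q from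
      integral_congr_ae (by filter_upwards [hconst] with ω hω; rw [hω])]
    rw [setIntegral_const]; rfl
  have hsplitP : ∫ ω, φ (X ω) ∂P = ∫ ω in A, φ (X ω) ∂P + ∫ ω in Aᶜ, φ (X ω) ∂P :=
    (integral_add_compl hAmeas hφP).symm
  have hsplitQ : ∫ ω, φ (X ω) ∂Q = ∫ ω in A, φ (X ω) ∂Q + ∫ ω in Aᶜ, φ (X ω) ∂Q :=
    (integral_add_compl hAmeas hφQ).symm
  -- toReal facts
  have hQAfin : Q A ≠ ⊤ := (measure_lt_top Q A).ne
  have hPAc : (P Aᶜ).toReal = 1 - (P A).toReal := by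
    rw [measure_compl hAmeas (measure_lt_top P A).ne, measure_univ,
      ENNReal.toReal_sub_of_le prob_le_one ENNReal.one_ne_top, ENNReal.toReal_one]
  have hQAc : (Q Aᶜ).toReal = 1 - (Q A).toReal := by
    rw [measure_compl hAmeas hQAfin, measure_univ,
      ENNReal.toReal_sub_of_le prob_le_one ENNReal.one_ne_top, ENNReal.toReal_one]
  have hPAreal : (P A).toReal = M.toReal * (Q A).toReal := by
    rw [hPAeq, ENNReal.toReal_mul]
  rw [hsplitP, hsplitQ, hintA, hintAcP, hintAcQ, ← hcP, ← hcQ, hPAc, hQAc, hPAreal]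
  ring
end
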